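/- arXiv:1706.02894 — 10 statements merged into one kernel-verified Lean document; each statement's English description precedes it below -/
import Mathlib

section
/- If φ, ψ : K → L are simplicial maps in the same contiguity class, then φ² and ψ² : K Π K → L Π L are in the same contiguity class. -/
attribute [local instance] Classical.decEq

/-- An abstract simplicial complex on vertex set `V`. -/
structure SC (V : Type) where
  faces : Set (Finset V)
  down_closed : ∀ {σ τ : Finset V}, σ ∈ faces → τ ⊆ σ → τ.Nonempty → τ ∈ faces

/-- A vertex map inducing a simplicial map `K → L`. -/
def IsSimplicialMap {V W : Type} (K : SC V) (L : SC W) (f : V → W) : Prop :=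
  ∀ σ ∈ K.faces, σ.image f ∈ L.faces

/-- Two maps are contiguous: for each simplex, the union of images is a simplex. -/
def Contiguous {V W : Type} (K : SC V) (L : SC W) (f g : V → W) : Prop :=
  ∀ σ ∈ K.faces, σ.image f ∪ σ.image g ∈ L.faces

/-- Being in the same contiguity class: connected by a finite chain of contiguous maps. -/
def ContigClass {V W : Type} (K : SC V) (L : SC W) : (V → W) → (V → W) → Prop :=
  Relation.ReflTransGen (Contiguous K L)

/-- The categorical product of two simplicial complexes. -/
def prodSC {V W : Type} (K : SC V) (L : SC W) : SC (V × W) where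
  faces := {σ | σ.image Prod.fst ∈ K.faces ∧ σ.image Prod.snd ∈ L.faces}
  down_closed := fun hσ hτσ hne =>
    ⟨K.down_closed hσ.1 (Finset.image_subset_image hτσ) (hne.image _),
     L.down_closed hσ.2 (Finset.image_subset_image hτσ) (hne.image _)⟩

/-- `Ω` is a Farber subcomplex of `K Π K`: a subcomplex admitting a simplicial map
`s : Ω → K` with `Δ ∘ s` in the contiguity class of the inclusion. -/
def IsFarber {V : Type} (K : SC V) (Ω : SC (V × V)) : Prop :=
  Ω.faces ⊆ (prodSC K K).faces ∧
  ∃ s : V × V → V, IsSimplicialMap Ω K s ∧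
    ContigClass Ω (prodSC K K) (fun p => (s p, s p)) id

/-- `K Π K` is covered by `n + 1` Farber subcomplexes. -/
def TCle {V : Type} (K : SC V) (n : ℕ) : Prop :=
  ∃ Ω : Fin (n + 1) → SC (V × V), (∀ i, IsFarber K (Ω i)) ∧
    ∀ σ ∈ (prodSC K K).faces, ∃ i, σ ∈ (Ω i).faces

/-- Discrete topological complexity. -/
noncomputable def TCdisc {V : Type} (K : SC V) : ℕ∞ :=
  sInf {n : ℕ∞ | ∃ m : ℕ, n = (m : ℕ∞) ∧ TCle K m}

/-- A categorical subcomplex: the inclusion is in the contiguity class of a constant map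
at a vertex of `K`. -/
def IsCategorical {V : Type} (K : SC V) (L : SC V) : Prop :=
  L.faces ⊆ K.faces ∧ ∃ v : V, {v} ∈ K.faces ∧ ContigClass L K id (fun _ => v)

/-- `K` is covered by `n + 1` categorical subcomplexes. -/
def scatLe {V : Type} (K : SC V) (n : ℕ) : Prop :=
  ∃ L : Fin (n + 1) → SC V, (∀ i, IsCategorical K (L i)) ∧
    ∀ σ ∈ K.faces, ∃ i, σ ∈ (L i).faces

/-- Normalized simplicial LS-category. -/
noncomputable def scat {V : Type} (K : SC V) : ℕ∞ :=
  sInf {n : ℕ∞ | ∃ m : ℕ, n = (m : ℕ∞) ∧ scatLe K m}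

/-- The preimage subcomplex of a subcomplex `Ω` under a vertex map `f`,
inside an ambient complex `M`. -/
def preimSC {V W : Type} (M : SC W) (Ω : SC V) (f : W → V) : SC W where
  faces := {τ | τ ∈ M.faces ∧ τ.image f ∈ Ω.faces}
  down_closed := fun hσ hτσ hne =>
    ⟨M.down_closed hσ.1 hτσ hne,
     Ω.down_closed hσ.2 (Finset.image_subset_image hτσ) (hne.image _)⟩

/-- `K` and `L` have the same strong homotopy type. -/
def StrongEquiv {V W : Type} (K : SC V) (L : SC W) : Prop :=
  ∃ (φ : V → W) (ψ : W → V), IsSimplicialMap K L φ ∧ IsSimplicialMap L K ψ ∧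
    ContigClass L L (φ ∘ ψ) id ∧ ContigClass K K (ψ ∘ φ) id

/-- `K` is edge-path connected. -/
def EdgeConn {V : Type} (K : SC V) : Prop :=
  ∀ v w : V, {v} ∈ K.faces → {w} ∈ K.faces →
    Relation.ReflTransGen (fun a b => ({a, b} : Finset V) ∈ K.faces) v w

/-- `K` is strongly collapsible: the identity is in the contiguity class of a constant map. -/
def StronglyCollapsible {V : Type} (K : SC V) : Prop :=
  ∃ v : V, {v} ∈ K.faces ∧ ContigClass K K id (fun _ => v)

lemma contiguous_simplicial_left {V W : Type} {K : SC V} {L : SC W} {f g : V → W}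
    (h : Contiguous K L f g) : IsSimplicialMap K L f := by
  intro σ hσ
  rcases σ.eq_empty_or_nonempty with rfl | hne
  · simpa using h ∅ hσ
  · exact L.down_closed (h σ hσ) Finset.subset_union_left (hne.image f)

lemma contiguous_simplicial_right {V W : Type} {K : SC V} {L : SC W} {f g : V → W}
    (h : Contiguous K L f g) : IsSimplicialMap K L g := by
  intro σ hσ
  rcases σ.eq_empty_or_nonempty with rfl | hne
  · simpa using h ∅ hσ
  · exact L.down_closed (h σ hσ) Finset.subset_union_right (hne.image g)

lemma contiguous_prod_fst {V W : Type} {K : SC V} {L : SC W} {f g h : V → W}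
    (hfg : Contiguous K L f g) (hh : IsSimplicialMap K L h) :
    Contiguous (prodSC K K) (prodSC L L) (Prod.map f h) (Prod.map g h) := by
  intro σ hσ
  constructor
  · have h1 := hfg _ hσ.1
    simp only [Finset.image_union, Finset.image_image, Function.comp_def,
      Prod.map_fst] at h1 ⊢
    exact h1
  · have h2 := hh _ hσ.2
    simp only [Finset.image_union, Finset.image_image, Function.comp_def,
      Prod.map_snd, Finset.union_self] at h2 ⊢
    exact h2

lemma contiguous_prod_snd {V W : Type} {K : SC V} {L : SC W} {f g h : V → W}
    (hfg : Contiguous K L f g) (hh : IsSimplicialMap K L h) :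
    Contiguous (prodSC K K) (prodSC L L) (Prod.map h f) (Prod.map h g) := by
  intro σ hσ
  constructor
  · have h1 := hh _ hσ.1
    simp only [Finset.image_union, Finset.image_image, Function.comp_def,
      Prod.map_fst, Finset.union_self] at h1 ⊢
    exact h1
  · have h2 := hfg _ hσ.2
    simp only [Finset.image_union, Finset.image_image, Function.comp_def,
      Prod.map_snd] at h2 ⊢
    exact h2

lemma contigClass_prod_fst {V W : Type} {K : SC V} {L : SC W} {f g h : V → W}
    (hfg : ContigClass K L f g) (hh : IsSimplicialMap K L h) :
    ContigClass (prodSC K K) (prodSC L L) (Prod.map f h) (Prod.map g h) := by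
  induction hfg with
  | refl => exact Relation.ReflTransGen.refl
  | tail _ hc ih => exact ih.tail (contiguous_prod_fst hc hh)

lemma contigClass_prod_snd {V W : Type} {K : SC V} {L : SC W} {f g h : V → W}
    (hfg : ContigClass K L f g) (hh : IsSimplicialMap K L h) :
    ContigClass (prodSC K K) (prodSC L L) (Prod.map h f) (Prod.map h g) := by
  induction hfg with
  | refl => exact Relation.ReflTransGen.refl
  | tail _ hc ih => exact ih.tail (contiguous_prod_snd hc hh)

/-- maps in the same contiguity class induce maps in the same
contiguity class on categorical products. -/
theorem contigClass_prod_map {V W : Type} (K : SC V) (L : SC W) (φ ψ : V → W)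
    (hφ : IsSimplicialMap K L φ) (hψ : IsSimplicialMap K L ψ)
    (h : ContigClass K L φ ψ) :
    ContigClass (prodSC K K) (prodSC L L) (Prod.map φ φ) (Prod.map ψ ψ) := by
  exact (contigClass_prod_fst h hφ).trans (contigClass_prod_snd h hψ)
end

section
/- If simplicial complexes K and L have the same strong homotopy type (i.e., there are simplicial maps φ : K → L and ψ : L → K with φ∘ψ in the contiguity class of the identity of L and ψ∘φ in the contiguity class of the identity of K), then their categorical products K Π K and L Π L have the same strong homotopy type. -/
attribute [local instance] Classical.decEq

lemma simplicial_prod {V W : Type} {K : SC V} {L : SC W} {f : V → W}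
    (hf : IsSimplicialMap K L f) :
    IsSimplicialMap (prodSC K K) (prodSC L L) (Prod.map f f) := by
  intro σ hσ
  constructor
  · convert hf _ hσ.1 using 2
    ext x; simp [Prod.map]
  · convert hf _ hσ.2 using 2
    ext x; simp [Prod.map]; aesop

lemma contiguous_prod {V : Type} {K : SC V} {f g : V → V}
    (h : Contiguous K K f g) :
    Contiguous (prodSC K K) (prodSC K K) (Prod.map f f) (Prod.map g g) := by
  intro σ hσ
  constructor
  · convert h _ hσ.1 using 2
    ext x; simp [Prod.map]; aesop
  · convert h _ hσ.2 using 2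
    ext x; simp [Prod.map]; aesop
lemma contigClass_prod {V : Type} {K : SC V} {f g : V → V}
    (h : ContigClass K K f g) :
    ContigClass (prodSC K K) (prodSC K K) (Prod.map f f) (Prod.map g g) :=
  by
    unfold ContigClass at h ⊢
    induction h with
    | refl => exact Relation.ReflTransGen.refl
    | tail _ hab ih => exact ih.tail (contiguous_prod hab)

/-- strong homotopy equivalence is preserved by categorical squares. -/
theorem strongEquiv_prod {V W : Type} (K : SC V) (L : SC W)
    (h : StrongEquiv K L) : StrongEquiv (prodSC K K) (prodSC L L) := by
  obtain ⟨φ, ψ, hφ, hψ, hL, hK⟩ := h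
  refine ⟨Prod.map φ φ, Prod.map ψ ψ, simplicial_prod hφ, simplicial_prod hψ, ?_, ?_⟩
  · have := contigClass_prod (K := L) hL
    have e1 : Prod.map (φ ∘ ψ) (φ ∘ ψ) = Prod.map φ φ ∘ Prod.map ψ ψ := by
      funext p; rfl
    have e2 : (Prod.map id id : W × W → W × W) = id := by funext p; rfl
    rwa [e1, e2] at this
  · have := contigClass_prod (K := K) hK
    have e1 : Prod.map (ψ ∘ φ) (ψ ∘ φ) = Prod.map ψ ψ ∘ Prod.map φ φ := by
      funext p; rfl
    have e2 : (Prod.map id id : V × V → V × V) = id := by funext p; rfl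
    rwa [e1, e2] at this
end

section
/- The discrete topological complexity is an invariant of strong homotopy type: if K and L have the same strong homotopy type then TC(K) = TC(L). -/
attribute [local instance] Classical.decEq

section Aux

variable {V W U : Type}

lemma contig_left_simplicial {K : SC V} {L : SC W} {f g : V → W}
    (h : Contiguous K L f g) : IsSimplicialMap K L f := by
  intro σ hσ
  rcases σ.eq_empty_or_nonempty with rfl | hne
  · simpa using h ∅ hσ
  · exact L.down_closed (h σ hσ) Finset.subset_union_left (hne.image f)

lemma contig_right_simplicial {K : SC V} {L : SC W} {f g : V → W}
    (h : Contiguous K L f g) : IsSimplicialMap K L g := by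
  intro σ hσ
  rcases σ.eq_empty_or_nonempty with rfl | hne
  · simpa using h ∅ hσ
  · exact L.down_closed (h σ hσ) Finset.subset_union_right (hne.image g)

lemma contig_pre {P : SC U} {M : SC V} {N : SC W} {F : U → V} {a b : V → W}
    (hF : IsSimplicialMap P M F) (h : Contiguous M N a b) :
    Contiguous P N (a ∘ F) (b ∘ F) := by
  intro σ hσ
  have := h (σ.image F) (hF σ hσ)
  simpa [Finset.image_image] using this

lemma contig_post {P : SC U} {M : SC V} {N : SC W} {a b : U → V} {G : V → W}
    (h : Contiguous P M a b) (hG : IsSimplicialMap M N G) :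
    Contiguous P N (G ∘ a) (G ∘ b) := by
  intro σ hσ
  have := hG _ (h σ hσ)
  simpa [Finset.image_union, Finset.image_image] using this

lemma contigClass_pre {P : SC U} {M : SC V} {N : SC W} {F : U → V} {a b : V → W}
    (hF : IsSimplicialMap P M F) (h : ContigClass M N a b) :
    ContigClass P N (a ∘ F) (b ∘ F) :=
  Relation.ReflTransGen.lift (· ∘ F) (fun _ _ hc => contig_pre hF hc) _ _ h

lemma contigClass_post {P : SC U} {M : SC V} {N : SC W} {a b : U → V} {G : V → W}
    (h : ContigClass P M a b) (hG : IsSimplicialMap M N G) :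
    ContigClass P N (G ∘ a) (G ∘ b) :=
  Relation.ReflTransGen.lift (G ∘ ·) (fun _ _ hc => contig_post hc hG) _ _ h

lemma contig_restrict {P M : SC V} {N : SC W} {a b : V → W}
    (hPM : P.faces ⊆ M.faces) (h : Contiguous M N a b) : Contiguous P N a b :=
  fun σ hσ => h σ (hPM hσ)

lemma contigClass_restrict {P M : SC V} {N : SC W} {a b : V → W}
    (hPM : P.faces ⊆ M.faces) (h : ContigClass M N a b) : ContigClass P N a b :=
  Relation.ReflTransGen.lift id (fun _ _ hc => contig_restrict hPM hc) _ _ h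

lemma prod_contig {K : SC V} {a b c d : V → V}
    (h1 : Contiguous K K a b) (h2 : Contiguous K K c d) :
    Contiguous (prodSC K K) (prodSC K K) (Prod.map a c) (Prod.map b d) := by
  intro σ hσ
  constructor
  · have := h1 (σ.image Prod.fst) hσ.1
    simpa [Finset.image_union, Finset.image_image, Prod.map_fst', Prod.map_snd', Function.comp] using this
  · have := h2 (σ.image Prod.snd) hσ.2
    simpa [Finset.image_union, Finset.image_image, Prod.map_fst', Prod.map_snd', Function.comp] using this

lemma contig_self {K : SC V} {L : SC W} {f : V → W} (hf : IsSimplicialMap K L f) :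
    Contiguous K L f f := by
  intro σ hσ
  simpa using hf σ hσ

lemma prod_contigClass {K : SC V} {f g : V → V} (hf : IsSimplicialMap K K f)
    (h : ContigClass K K f g) :
    ContigClass (prodSC K K) (prodSC K K) (Prod.map f f) (Prod.map g g) := by
  induction h with
  | refl => exact Relation.ReflTransGen.refl
  | tail hab hbc ih =>
    rename_i b c
    have hb : IsSimplicialMap K K b := contig_left_simplicial hbc
    have hc : IsSimplicialMap K K c := contig_right_simplicial hbc
    exact (ih.tail (prod_contig hbc (contig_self hb))).tail
      (prod_contig (contig_self hc) hbc)

/-- One direction of the invariance: a strong equivalence transports Farber covers. -/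
lemma TCle_of_equiv {K : SC V} {L : SC W} {φ : V → W} {ψ : W → V}
    (hφ : IsSimplicialMap K L φ) (hψ : IsSimplicialMap L K ψ)
    (hK : ContigClass K K (ψ ∘ φ) id) {n : ℕ} (hL : TCle L n) : TCle K n := by
  obtain ⟨Ω, hFar, hcov⟩ := hL
  set F : V × V → W × W := Prod.map φ φ with hF
  have hFsimp : IsSimplicialMap (prodSC K K) (prodSC L L) F := by
    intro σ hσ
    constructor
    · have := hφ _ hσ.1
      simpa [Finset.image_image, Prod.map_fst', Prod.map_snd', Function.comp, hF] using this
    · have := hφ _ hσ.2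
      simpa [Finset.image_image, Prod.map_fst', Prod.map_snd', Function.comp, hF] using this
  have hGsimp : IsSimplicialMap (prodSC L L) (prodSC K K) (Prod.map ψ ψ) := by
    intro σ hσ
    constructor
    · have := hψ _ hσ.1
      simpa [Finset.image_image, Prod.map_fst', Prod.map_snd', Function.comp] using this
    · have := hψ _ hσ.2
      simpa [Finset.image_image, Prod.map_fst', Prod.map_snd', Function.comp] using this
  refine ⟨fun i => preimSC (prodSC K K) (Ω i) F, fun i => ?_, fun σ hσ => ?_⟩
  · obtain ⟨hsub, s, hs, hcls⟩ := hFar i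
    have hsubK : (preimSC (prodSC K K) (Ω i) F).faces ⊆ (prodSC K K).faces :=
      fun σ hσ => hσ.1
    refine ⟨hsubK, ψ ∘ s ∘ F, ?_, ?_⟩
    · intro σ hσ
      have := hψ _ (hs _ hσ.2)
      simpa [Finset.image_image, Function.comp] using this
    · -- F is simplicial from the preimage complex into Ω i
      have hFΩ : IsSimplicialMap (preimSC (prodSC K K) (Ω i) F) (Ω i) F :=
        fun σ hσ => hσ.2
      have c1 : ContigClass (preimSC (prodSC K K) (Ω i) F) (prodSC L L)
          ((fun p => (s p, s p)) ∘ F) (id ∘ F) := contigClass_pre hFΩ hcls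
      have c2 : ContigClass (preimSC (prodSC K K) (Ω i) F) (prodSC K K)
          (Prod.map ψ ψ ∘ ((fun p => (s p, s p)) ∘ F)) (Prod.map ψ ψ ∘ (id ∘ F)) :=
        contigClass_post c1 hGsimp
      have hψφ : IsSimplicialMap K K (ψ ∘ φ) := by
        intro σ hσ
        have := hψ _ (hφ _ hσ)
        simpa [Finset.image_image] using this
      have c3 : ContigClass (prodSC K K) (prodSC K K)
          (Prod.map (ψ ∘ φ) (ψ ∘ φ)) (Prod.map id id) := prod_contigClass hψφ hK
      have c3' : ContigClass (preimSC (prodSC K K) (Ω i) F) (prodSC K K)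
          (Prod.map (ψ ∘ φ) (ψ ∘ φ)) (Prod.map id id) :=
        contigClass_restrict hsubK c3
      have e1 : (Prod.map ψ ψ ∘ ((fun p => (s p, s p)) ∘ F))
          = (fun p => (ψ (s (F p)), ψ (s (F p)))) := rfl
      have e2 : (Prod.map ψ ψ ∘ (id ∘ F)) = Prod.map (ψ ∘ φ) (ψ ∘ φ) := rfl
      have e3 : (Prod.map (id : V → V) id) = (id : V × V → V × V) := by
        funext p; rfl
      rw [e1, e2] at c2
      rw [e3] at c3'
      exact c2.trans c3'
  · have h1 : (σ.image F) ∈ (prodSC L L).faces := by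
      convert hFsimp σ hσ using 2 <;> exact Subsingleton.elim _ _
    obtain ⟨i, hi⟩ := hcov _ h1
    refine ⟨i, hσ, ?_⟩
    convert hi using 2 <;> exact Subsingleton.elim _ _

lemma TCdisc_le_of_equiv {K : SC V} {L : SC W} {φ : V → W} {ψ : W → V}
    (hφ : IsSimplicialMap K L φ) (hψ : IsSimplicialMap L K ψ)
    (hK : ContigClass K K (ψ ∘ φ) id) : TCdisc K ≤ TCdisc L := by
  apply sInf_le_sInf
  rintro n ⟨m, rfl, hm⟩
  exact ⟨m, rfl, TCle_of_equiv hφ hψ hK hm⟩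

end Aux

/-- discrete topological complexity is a strong homotopy invariant. -/
theorem TCdisc_strong_homotopy_invariant {V W : Type} (K : SC V) (L : SC W)
    (h : StrongEquiv K L) : TCdisc K = TCdisc L := by
  obtain ⟨φ, ψ, hφ, hψ, hL, hK⟩ := h
  exact le_antisymm (TCdisc_le_of_equiv hφ hψ hK) (TCdisc_le_of_equiv hψ hφ hL)
end

section
/- If K and L have the same strong homotopy type via maps φ : K → L, ψ : L → K, and Ω ⊆ K Π K is a Farber subcomplex, then the preimage Λ = (ψ²)⁻¹(Ω) ⊆ L Π L is a Farber subcomplex of L Π L. -/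
attribute [local instance] Classical.decEq

lemma contigClass_post_s4 {A B C : Type} {KA : SC A} {KB : SC B} {KC : SC C}
    {f g : A → B} (h : B → C) (hh : IsSimplicialMap KB KC h)
    (hc : ContigClass KA KB f g) : ContigClass KA KC (h ∘ f) (h ∘ g) := by
  refine Relation.ReflTransGen.lift (fun m => h ∘ m) (fun a b hab σ hσ => ?_) _ _ hc
  have := hh _ (hab σ hσ)
  simpa [Finset.image_union, Finset.image_image] using this

lemma contigClass_pre_s4 {A B C : Type} {KA : SC A} {KB : SC B} {KC : SC C}
    {f g : B → C} (h : A → B) (hh : IsSimplicialMap KA KB h)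
    (hc : ContigClass KB KC f g) : ContigClass KA KC (f ∘ h) (g ∘ h) := by
  refine Relation.ReflTransGen.lift (fun m => m ∘ h) (fun a b hab σ hσ => ?_) _ _ hc
  have := hab _ (hh σ hσ)
  simpa [Finset.image_image] using this

lemma contigClass_restrict_s4 {A B : Type} {KA KA' : SC A} {KB : SC B}
    {f g : A → B} (hsub : KA'.faces ⊆ KA.faces)
    (hc : ContigClass KA KB f g) : ContigClass KA' KB f g :=
  Relation.ReflTransGen.mono (fun _ _ hab σ hσ => hab σ (hsub hσ)) _ _ hc

lemma contigClass_prodmap {W : Type} {L : SC W} {f g : W → W}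
    (hc : ContigClass L L f g) :
    ContigClass (prodSC L L) (prodSC L L) (Prod.map f f) (Prod.map g g) := by
  refine Relation.ReflTransGen.lift (fun m => Prod.map m m)
    (fun a b hab σ hσ => ?_) _ _ hc
  constructor
  · have := hab _ hσ.1
    simpa [Finset.image_union, Finset.image_image, Function.comp_def] using this
  · have := hab _ hσ.2
    simpa [Finset.image_union, Finset.image_image, Function.comp_def] using this

/-- the preimage of a Farber subcomplex under a strong homotopy
equivalence is a Farber subcomplex. -/
theorem isFarber_preimage {V W : Type} (K : SC V) (L : SC W) (φ : V → W) (ψ : W → V)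
    (hφ : IsSimplicialMap K L φ) (hψ : IsSimplicialMap L K ψ)
    (h1 : ContigClass L L (φ ∘ ψ) id) (h2 : ContigClass K K (ψ ∘ φ) id)
    (Ω : SC (V × V)) (hΩ : IsFarber K Ω) :
    IsFarber L (preimSC (prodSC L L) Ω (Prod.map ψ ψ)) := by
  obtain ⟨hΩsub, s, hs, hcontig⟩ := hΩ
  set Λ := preimSC (prodSC L L) Ω (Prod.map ψ ψ)
  have hΛsub : Λ.faces ⊆ (prodSC L L).faces := fun τ hτ => hτ.1
  have hψ2 : IsSimplicialMap Λ Ω (Prod.map ψ ψ) := fun τ hτ => hτ.2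
  have hφ2 : IsSimplicialMap (prodSC K K) (prodSC L L) (Prod.map φ φ) := by
    intro σ hσ
    constructor
    · have := hφ _ hσ.1
      simpa [Finset.image_image, Function.comp_def] using this
    · have := hφ _ hσ.2
      simpa [Finset.image_image, Function.comp_def] using this
  refine ⟨hΛsub, fun p => φ (s (Prod.map ψ ψ p)), ?_, ?_⟩
  · intro τ hτ
    have h1 : (τ.image (Prod.map ψ ψ)).image s ∈ K.faces := by
      have := hψ2 τ hτ
      exact hs _ (by convert this using 2)
    have h2 := hφ _ h1
    simpa [Finset.image_image, Function.comp_def] using h2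
  · have step1 : ContigClass Λ (prodSC L L)
        ((Prod.map φ φ) ∘ (fun p => (s p, s p)) ∘ (Prod.map ψ ψ))
        ((Prod.map φ φ) ∘ id ∘ (Prod.map ψ ψ)) := by
      have := contigClass_post_s4 (KA := Ω) (Prod.map φ φ) hφ2 hcontig
      exact contigClass_pre_s4 (Prod.map ψ ψ) hψ2 this
    have step2 : ContigClass Λ (prodSC L L) (Prod.map (φ ∘ ψ) (φ ∘ ψ)) id := by
      have := contigClass_prodmap (L := L) h1
      have := contigClass_restrict_s4 hΛsub this
      simpa [Prod.map_id] using this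
    refine Relation.ReflTransGen.trans ?_ step2
    exact step1
end

section
/- For a subcomplex Ω of the categorical product K² = K Π K, the following are equivalent: (1) Ω is a Farber subcomplex; (2) the restrictions of the two projections π₁, π₂ : K² → K to Ω are in the same contiguity class; (3) the restriction of π₁ (equivalently of π₂) to Ω is a homotopic section of the diagonal Δ : K → K², i.e., Δ∘(π₁|_Ω) is in the contiguity class of the inclusion Ω ⊆ K². -/
attribute [local instance] Classical.decEq

private lemma contig_symm {V W : Type} {K : SC V} {L : SC W} {f g : V → W}
    (h : Contiguous K L f g) : Contiguous K L g f := fun σ hσ => by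
  rw [Finset.union_comm]; exact h σ hσ

private lemma cc_symm {V W : Type} {K : SC V} {L : SC W} {f g : V → W}
    (h : ContigClass K L f g) : ContigClass K L g f := by
  induction h with
  | refl => exact .refl
  | tail _ h ih => exact .head (contig_symm h) ih

private lemma cc_comp {V W X : Type} {K : SC V} {L : SC W} {M : SC X} {f g : V → W}
    {t : W → X} (ht : IsSimplicialMap L M t) (h : ContigClass K L f g) :
    ContigClass K M (t ∘ f) (t ∘ g) := by
  induction h with
  | refl => exact .refl
  | tail _ h ih =>
    refine ih.tail (fun σ hσ => ?_)
    have := ht _ (h σ hσ)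
    simpa [Finset.image_union, Finset.image_image, Function.comp_def] using this

private lemma cc_pair_left {V : Type} {K : SC V} {Ω : SC (V × V)} {a f g : V × V → V}
    (ha : IsSimplicialMap Ω K a) (h : ContigClass Ω K f g) :
    ContigClass Ω (prodSC K K) (fun p => (a p, f p)) (fun p => (a p, g p)) := by
  induction h with
  | refl => exact .refl
  | tail _ hstep ih =>
    refine ih.tail (fun σ hσ => ⟨?_, ?_⟩)
    · simpa [Finset.image_union, Finset.image_image, Finset.union_self,
        Function.comp_def] using ha σ hσ
    · simpa [Finset.image_union, Finset.image_image, Function.comp_def] using hstep σ hσ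

private lemma cc_pair_right {V : Type} {K : SC V} {Ω : SC (V × V)} {a f g : V × V → V}
    (ha : IsSimplicialMap Ω K a) (h : ContigClass Ω K f g) :
    ContigClass Ω (prodSC K K) (fun p => (f p, a p)) (fun p => (g p, a p)) := by
  induction h with
  | refl => exact .refl
  | tail _ hstep ih =>
    refine ih.tail (fun σ hσ => ⟨?_, ?_⟩)
    · simpa [Finset.image_union, Finset.image_image, Function.comp_def] using hstep σ hσ
    · simpa [Finset.image_union, Finset.image_image, Finset.union_self,
        Function.comp_def] using ha σ hσ

/-- characterizations of Farber subcomplexes. -/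
theorem isFarber_iff {V : Type} (K : SC V) (Ω : SC (V × V))
    (hΩ : Ω.faces ⊆ (prodSC K K).faces) :
    (IsFarber K Ω ↔ ContigClass Ω K Prod.fst Prod.snd) ∧
    (IsFarber K Ω ↔ ContigClass Ω (prodSC K K) (fun p => (p.1, p.1)) id) ∧
    (IsFarber K Ω ↔ ContigClass Ω (prodSC K K) (fun p => (p.2, p.2)) id) := by
  have hfst : IsSimplicialMap Ω K Prod.fst := fun σ hσ => (hΩ hσ).1
  have hsnd : IsSimplicialMap Ω K Prod.snd := fun σ hσ => (hΩ hσ).2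
  have pfst : IsSimplicialMap (prodSC K K) K Prod.fst := fun σ hσ => hσ.1
  have psnd : IsSimplicialMap (prodSC K K) K Prod.snd := fun σ hσ => hσ.2
  -- (1) → (2)
  have h12 : IsFarber K Ω → ContigClass Ω K Prod.fst Prod.snd := by
    rintro ⟨-, s, hs, hc⟩
    have h1 : ContigClass Ω K (Prod.fst ∘ (fun p : V × V => (s p, s p))) (Prod.fst ∘ id) :=
      cc_comp pfst hc
    have h2 : ContigClass Ω K (Prod.snd ∘ (fun p : V × V => (s p, s p))) (Prod.snd ∘ id) :=
      cc_comp psnd hc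
    exact (cc_symm h1).trans h2
  -- (2) → (3)
  have h23 : ContigClass Ω K Prod.fst Prod.snd →
      ContigClass Ω (prodSC K K) (fun p => (p.1, p.1)) id := by
    intro h
    have := cc_pair_left (a := Prod.fst) hfst h
    exact this
  -- (2) → (3')
  have h23' : ContigClass Ω K Prod.fst Prod.snd →
      ContigClass Ω (prodSC K K) (fun p => (p.2, p.2)) id := by
    intro h
    have := cc_pair_right (a := Prod.snd) hsnd (cc_symm h)
    exact this
  -- (3) → (1)
  have h31 : ContigClass Ω (prodSC K K) (fun p => (p.1, p.1)) id → IsFarber K Ω :=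
    fun h => ⟨hΩ, Prod.fst, hfst, h⟩
  -- (3') → (1)
  have h31' : ContigClass Ω (prodSC K K) (fun p => (p.2, p.2)) id → IsFarber K Ω :=
    fun h => ⟨hΩ, Prod.snd, hsnd, h⟩
  exact ⟨⟨h12, fun h => h31 (h23 h)⟩,
    ⟨fun h => h23 (h12 h), h31⟩,
    ⟨fun h => h23' (h12 h), h31'⟩⟩
end

section
/- If K is an edge-path connected complex and Ω ⊆ K Π K is a categorical subcomplex (the inclusion ι_Ω is in the contiguity class of a constant map), then Ω is a Farber subcomplex; indeed σ = π₁|_Ω satisfies Δ∘σ ∼ ι_Ω. -/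
attribute [local instance] Classical.decEq

/-- Contiguity is symmetric. -/
lemma contiguous_symm {V W : Type} (K : SC V) (L : SC W) :
    Symmetric (Contiguous K L) := by
  intro f g hfg σ hσ
  rw [Finset.union_comm]
  exact hfg σ hσ

/-- Postcomposition with a simplicial map preserves contiguity. -/
lemma contiguous_comp {V W U : Type} (Ω : SC V) (L : SC W) (M : SC U)
    (g : W → U) (hg : IsSimplicialMap L M g) {f₁ f₂ : V → W}
    (hf : Contiguous Ω L f₁ f₂) : Contiguous Ω M (g ∘ f₁) (g ∘ f₂) := by
  intro σ hσ
  have := hg _ (hf σ hσ)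
  simpa [Finset.image_union, Finset.image_image] using this

/-- Postcomposition with a simplicial map preserves contiguity classes. -/
lemma contigClass_comp {V W U : Type} (Ω : SC V) (L : SC W) (M : SC U)
    (g : W → U) (hg : IsSimplicialMap L M g) {f₁ f₂ : V → W}
    (hf : ContigClass Ω L f₁ f₂) : ContigClass Ω M (g ∘ f₁) (g ∘ f₂) :=
  Relation.ReflTransGen.lift (fun f => g ∘ f)
    (fun _ _ hab => contiguous_comp Ω L M g hg hab) _ _ hf

/-- for edge-path connected `K`, a categorical subcomplex of `K Π K`
is a Farber subcomplex, with section `π₁|_Ω`. -/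
theorem categorical_is_farber {V : Type} (K : SC V) (h : EdgeConn K)
    (Ω : SC (V × V)) (hΩ : Ω.faces ⊆ (prodSC K K).faces)
    (hcat : ∃ z : V × V, {z} ∈ (prodSC K K).faces ∧
      ContigClass Ω (prodSC K K) id (fun _ => z)) :
    IsFarber K Ω ∧ ContigClass Ω (prodSC K K) (fun p => (p.1, p.1)) id := by
  obtain ⟨z, hz, hc⟩ := hcat
  have hz1 : ({z.1} : Finset V) ∈ K.faces := by
    have := hz.1
    simpa using this
  have hz2 : ({z.2} : Finset V) ∈ K.faces := by
    have := hz.2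
    simpa using this
  -- the "diagonal-from-first-coordinate" map on the product is simplicial
  have hd : IsSimplicialMap (prodSC K K) (prodSC K K)
      (fun p : V × V => (p.1, p.1)) := by
    intro σ hσ
    constructor
    · simpa [Finset.image_image, Function.comp_def] using hσ.1
    · simpa [Finset.image_image, Function.comp_def] using hσ.1
  -- constant maps at endpoints of an edge path are in the same contiguity class
  have hconst : ∀ a b : V,
      Relation.ReflTransGen (fun a b => ({a, b} : Finset V) ∈ K.faces) a b →
      ContigClass Ω (prodSC K K) (fun _ => (z.1, a)) (fun _ => (z.1, b)) := by
    intro a b hab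
    induction hab with
    | refl => exact Relation.ReflTransGen.refl
    | @tail b c hab hedge ih =>
        refine ih.tail ?_
        intro σ hσ
        rcases σ.eq_empty_or_nonempty with rfl | hne
        · simpa using hΩ hσ
        · refine ⟨?_, ?_⟩
          · simpa [Finset.image_const hne, Finset.image_union] using hz1
          · simpa [Finset.image_const hne, Finset.image_union] using hedge
  -- (p.1, p.1) ∼ const (z.1, z.1)
  have h1 : ContigClass Ω (prodSC K K) (fun p => (p.1, p.1))
      (fun _ => (z.1, z.1)) :=
    contigClass_comp Ω (prodSC K K) (prodSC K K) (fun p => (p.1, p.1)) hd hc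
  -- const (z.1, z.1) ∼ const z
  have h2 : ContigClass Ω (prodSC K K) (fun _ => (z.1, z.1)) (fun _ => z) := by
    have := hconst z.1 z.2 (h z.1 z.2 hz1 hz2)
    simpa using this
  -- const z ∼ id
  have h3 : ContigClass Ω (prodSC K K) (fun _ => z) id :=
    (@Relation.ReflTransGen.symmetric _ _ ⟨fun a b hab => contiguous_symm Ω (prodSC K K) hab⟩).symm _ _ hc
  have hmain : ContigClass Ω (prodSC K K) (fun p => (p.1, p.1)) id :=
    (h1.trans h2).trans h3
  refine ⟨⟨hΩ, ⟨fun p => p.1, fun σ hσ => (hΩ hσ).1, hmain⟩⟩, hmain⟩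
end

section
/- Let K = ∂Δ² be the boundary of the 2-simplex with vertices a, b, c (simplices: the three vertices and the three edges {a,b}, {a,c}, {b,c}). Then the discrete topological complexity TC(K) = 2. -/
attribute [local instance] Classical.decEq

/-- The boundary of the 2-simplex: vertices `0, 1, 2` and the three edges. -/
def boundaryTwoSimplex : SC (Fin 3) where
  faces := {σ | σ.Nonempty ∧ σ.card ≤ 2}
  down_closed := fun hσ hτσ hne => ⟨hne, le_trans (Finset.card_le_card hτσ) hσ.2⟩


-- ===== winding machinery =====

def dlt (x y : Fin 3) : ℤ := if y = x then 0 else if (y : ℕ) = ((x : ℕ) + 1) % 3 then 1 else -1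

def wind {α : Type} (f : α → Fin 3) : List α → ℤ
  | a :: b :: t => dlt (f a) (f b) + wind f (b :: t)
  | _ => 0

def chainP {α : Type} (R : α → α → Prop) : α → List α → Prop
  | _, [] => True
  | a, b :: t => R a b ∧ chainP R b t

instance chainP.dec {α : Type} (R : α → α → Prop) [DecidableRel R] :
    ∀ (a : α) (l : List α), Decidable (chainP R a l)
  | _, [] => isTrue trivial
  | a, b :: t => @instDecidableAnd _ _ _ (chainP.dec R b t)

lemma KB_pair {S : Finset (Fin 3)} (h : S ∈ boundaryTwoSimplex.faces) {x y z : Fin 3}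
    (hx : x ∈ S) (hy : y ∈ S) (hz : z ∈ S) : x = y ∨ x = z ∨ y = z := by
  by_contra hcon
  push_neg at hcon
  obtain ⟨h1, h2, h3⟩ := hcon
  have hsub : ({x, y, z} : Finset (Fin 3)) ⊆ S := by
    simp [Finset.insert_subset_iff, hx, hy, hz]
  have hcard : ({x, y, z} : Finset (Fin 3)).card = 3 := by
    rw [Finset.card_insert_of_notMem (by simp [h1, h2]),
        Finset.card_insert_of_notMem (by simp [h3]), Finset.card_singleton]
  have hle := Finset.card_le_card hsub
  have h2' := h.2
  omega

set_option synthInstance.maxSize 2000 in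
set_option maxHeartbeats 1000000 in
lemma quad : ∀ p q r s : Fin 3,
    (p = q ∨ p = r ∨ q = r) → (p = q ∨ p = s ∨ q = s) →
    (p = r ∨ p = s ∨ r = s) → (q = r ∨ q = s ∨ r = s) →
    dlt p q - dlt r s = dlt p r - dlt q s := by decide

lemma step {U : Type} (L : SC U) (f g : U → Fin 3)
    (hc : Contiguous L boundaryTwoSimplex f g) [DecidableEq U]
    {a b : U} (hab : ({a, b} : Finset U) ∈ L.faces) :
    dlt (f a) (f b) - dlt (g a) (g b) = dlt (f a) (g a) - dlt (f b) (g b) := by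
  have h := hc _ hab
  have hma : a ∈ ({a, b} : Finset U) := Finset.mem_insert_self a {b}
  have hmb : b ∈ ({a, b} : Finset U) := by simp
  refine quad _ _ _ _ (KB_pair h ?_ ?_ ?_) (KB_pair h ?_ ?_ ?_)
    (KB_pair h ?_ ?_ ?_) (KB_pair h ?_ ?_ ?_) <;>
    simp [Finset.mem_union, Finset.mem_image]

lemma tele {U : Type} [DecidableEq U] (L : SC U) (f g : U → Fin 3)
    (hc : Contiguous L boundaryTwoSimplex f g) :
    ∀ (l : List U) (a c : U),
      chainP (fun x y => ({x, y} : Finset U) ∈ L.faces) a (l ++ [c]) →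
      wind f (a :: (l ++ [c])) - wind g (a :: (l ++ [c])) =
        dlt (f a) (g a) - dlt (f c) (g c) := by
  intro l
  induction l with
  | nil =>
    intro a c h
    simp only [List.nil_append, chainP, and_true] at h
    have hs := step L f g hc h
    simp only [List.nil_append, wind]
    omega
  | cons e l ih =>
    intro a c h
    simp only [List.cons_append, chainP] at h
    have hs := step L f g hc h.1
    have ihe := ih e c h.2
    simp only [List.cons_append, List.append_eq, wind] at ihe ⊢
    omega

lemma windCC {U : Type} [DecidableEq U] (L : SC U) {f g : U → Fin 3}
    (h : ContigClass L boundaryTwoSimplex f g) (a : U) (l : List U)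
    (hch : chainP (fun x y => ({x, y} : Finset U) ∈ L.faces) a (l ++ [a])) :
    wind f (a :: (l ++ [a])) = wind g (a :: (l ++ [a])) := by
  induction h with
  | refl => rfl
  | tail h1 h2 ih =>
    have := tele L _ _ h2 l a a hch
    omega

lemma contigFst {Ω : SC (Fin 3 × Fin 3)} {F G : Fin 3 × Fin 3 → Fin 3 × Fin 3}
    (h : Contiguous Ω (prodSC boundaryTwoSimplex boundaryTwoSimplex) F G) :
    Contiguous Ω boundaryTwoSimplex (fun u => (F u).1) (fun u => (G u).1) := by
  intro σ hσ
  have h2 := (h σ hσ).1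
  simp only [Finset.image_union, Finset.image_image] at h2
  exact h2

lemma contigSnd {Ω : SC (Fin 3 × Fin 3)} {F G : Fin 3 × Fin 3 → Fin 3 × Fin 3}
    (h : Contiguous Ω (prodSC boundaryTwoSimplex boundaryTwoSimplex) F G) :
    Contiguous Ω boundaryTwoSimplex (fun u => (F u).2) (fun u => (G u).2) := by
  intro σ hσ
  have h2 := (h σ hσ).2
  simp only [Finset.image_union, Finset.image_image] at h2
  exact h2

lemma ccFst {Ω : SC (Fin 3 × Fin 3)} {F G : Fin 3 × Fin 3 → Fin 3 × Fin 3}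
    (h : ContigClass Ω (prodSC boundaryTwoSimplex boundaryTwoSimplex) F G) :
    ContigClass Ω boundaryTwoSimplex (fun u => (F u).1) (fun u => (G u).1) :=
  Relation.ReflTransGen.lift (fun (F : Fin 3 × Fin 3 → Fin 3 × Fin 3) => (fun u => (F u).1))
    (fun _ _ hab => contigFst hab) _ _ h

lemma ccSnd {Ω : SC (Fin 3 × Fin 3)} {F G : Fin 3 × Fin 3 → Fin 3 × Fin 3}
    (h : ContigClass Ω (prodSC boundaryTwoSimplex boundaryTwoSimplex) F G) :
    ContigClass Ω boundaryTwoSimplex (fun u => (F u).2) (fun u => (G u).2) :=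
  Relation.ReflTransGen.lift (fun (F : Fin 3 × Fin 3 → Fin 3 × Fin 3) => (fun u => (F u).2))
    (fun _ _ hab => contigSnd hab) _ _ h

lemma noBad {Ω : SC (Fin 3 × Fin 3)} (hf : IsFarber boundaryTwoSimplex Ω)
    (a : Fin 3 × Fin 3) (l : List (Fin 3 × Fin 3))
    (hch : chainP (fun x y => ({x, y} : Finset (Fin 3 × Fin 3)) ∈ Ω.faces) a (l ++ [a])) :
    wind (fun u => u.1) (a :: (l ++ [a])) = wind (fun u => u.2) (a :: (l ++ [a])) := by
  obtain ⟨hsub, s, hs, hcc⟩ := hf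
  have h1 : ContigClass Ω boundaryTwoSimplex (fun u => s u) (fun u => u.1) := ccFst hcc
  have h2 : ContigClass Ω boundaryTwoSimplex (fun u => s u) (fun u => u.2) := ccSnd hcc
  have w1 := windCC Ω h1 a l hch
  have w2 := windCC Ω h2 a l hch
  omega

-- ===== facets and bad patterns =====

def ed : Fin 3 → Finset (Fin 3) := ![{0, 1}, {0, 2}, {1, 2}]

def fct (p : Fin 3 × Fin 3) : Finset (Fin 3 × Fin 3) := ed p.1 ×ˢ ed p.2

def entries : List (List (Fin 3 × Fin 3) × ((Fin 3 × Fin 3) × List (Fin 3 × Fin 3))) :=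
  [ ([(0,0), (0,1), (0,2)], ((0,0), [(0,1), (0,2)])),
    ([(1,0), (1,1), (1,2)], ((0,0), [(0,1), (0,2)])),
    ([(2,0), (2,1), (2,2)], ((1,0), [(1,1), (1,2)])),
    ([(0,0), (1,0), (2,0)], ((0,0), [(0,1), (1,0), (1,1), (2,0)])),
    ([(0,1), (1,1), (2,1)], ((0,0), [(0,2), (1,0), (1,2), (2,0)])),
    ([(0,2), (1,2), (2,2)], ((0,1), [(0,2), (1,1), (1,2), (2,1)])),
    ([(0,0), (1,2), (2,1)], ((0,0), [(0,1), (0,2), (2,1), (2,2), (1,0)])),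
    ([(0,1), (1,0), (2,2)], ((0,0), [(0,1), (2,0), (2,1), (1,1), (1,2)])),
    ([(0,2), (1,1), (2,0)], ((0,0), [(0,2), (0,1), (1,1), (1,0), (2,0)])),
    ([(0,0), (0,1), (1,2)], ((0,0), [(0,1), (0,2)])),
    ([(0,0), (0,2), (1,1)], ((0,0), [(0,1), (0,2)])),
    ([(0,1), (0,2), (1,0)], ((0,0), [(0,1), (0,2)])),
    ([(1,0), (2,1), (2,2)], ((0,0), [(0,1), (2,0), (1,0), (1,2), (1,1), (2,1)])),
    ([(1,1), (2,0), (2,2)], ((0,0), [(0,2), (2,0), (1,0), (1,1), (1,2), (2,2)])),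
    ([(1,2), (2,0), (2,1)], ((0,1), [(0,2), (2,1), (1,0), (1,1), (2,0), (2,2)])) ]

set_option maxHeartbeats 4000000 in
set_option maxRecDepth 100000 in
lemma cover5 : ∀ S : Finset (Fin 3 × Fin 3), 5 ≤ S.card → ∃ e ∈ entries, ∀ p ∈ e.1, p ∈ S := by decide

set_option maxHeartbeats 4000000 in
lemma entriesChk : ∀ e ∈ entries,
    chainP (fun x y => ∃ p ∈ e.1, x ∈ fct p ∧ y ∈ fct p) e.2.1 (e.2.2 ++ [e.2.1]) ∧
    wind (fun u => u.1) (e.2.1 :: (e.2.2 ++ [e.2.1])) ≠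
      wind (fun u => u.2) (e.2.1 :: (e.2.2 ++ [e.2.1])) := by decide

lemma chainP_imp {α : Type} {R S : α → α → Prop} (h : ∀ x y, R x y → S x y) :
    ∀ (a : α) (l : List α), chainP R a l → chainP S a l
  | _, [], _ => trivial
  | a, b :: t, hc => ⟨h _ _ hc.1, chainP_imp h b t hc.2⟩

lemma killer {Ω : SC (Fin 3 × Fin 3)} (hf : IsFarber boundaryTwoSimplex Ω)
    (S : Finset (Fin 3 × Fin 3)) (hS : 5 ≤ S.card)
    (hmem : ∀ p ∈ S, fct p ∈ Ω.faces) : False := by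
  obtain ⟨e, he, hes⟩ := cover5 S hS
  obtain ⟨hch, hw⟩ := entriesChk e he
  apply hw
  apply noBad hf
  refine chainP_imp (fun x y hxy => ?_) _ _ hch
  obtain ⟨p, hp, hx, hy⟩ := hxy
  exact Ω.down_closed (hmem p (hes p hp))
    (Finset.insert_subset hx (Finset.singleton_subset_iff.mpr hy))
    (Finset.insert_nonempty _ _)

set_option maxRecDepth 10000 in
lemma fctPK : ∀ p : Fin 3 × Fin 3,
    fct p ∈ (prodSC boundaryTwoSimplex boundaryTwoSimplex).faces := by
  simp only [prodSC, boundaryTwoSimplex, Set.mem_setOf_eq,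
    Subsingleton.elim (Classical.decEq (Fin 3)) (instDecidableEqFin 3)]
  rw [Subsingleton.elim (Classical.decEq (Fin 3)) (instDecidableEqFin 3)]
  decide

lemma TCle_zero_one : TCle boundaryTwoSimplex 0 → TCle boundaryTwoSimplex 1 := by
  rintro ⟨Ω, h1, h2⟩
  refine ⟨fun _ => Ω 0, fun _ => h1 0, fun σ hσ => ?_⟩
  obtain ⟨i, hi⟩ := h2 σ hσ
  exact ⟨0, by rwa [Fin.fin_one_eq_zero i] at hi⟩

lemma notTCle1 : ¬ TCle boundaryTwoSimplex 1 := by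
  classical
  rintro ⟨Ω, hfar, hcov⟩
  set S : Finset (Fin 3 × Fin 3) :=
    Finset.univ.filter (fun p => fct p ∈ (Ω 0).faces) with hSdef
  have hcards : S.card + Sᶜ.card = 9 := by
    rw [Finset.card_add_card_compl]
    decide
  by_cases h5 : 5 ≤ S.card
  · exact killer (hfar 0) S h5 (fun p hp => (Finset.mem_filter.mp hp).2)
  · have h5' : 5 ≤ Sᶜ.card := by omega
    refine killer (hfar 1) Sᶜ h5' (fun p hp => ?_)
    have hn : fct p ∉ (Ω 0).faces := by
      have := Finset.mem_compl.mp hp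
      simpa [hSdef] using this
    obtain ⟨i, hi⟩ := hcov (fct p) (fctPK p)
    fin_cases i
    · exact absurd hi hn
    · exact hi

-- ===== upper bound =====

def Om0 : SC (Fin 3 × Fin 3) where
  faces := {σ | σ.Nonempty ∧ ∃ v : Fin 3, ∀ p ∈ σ, p.1 ≠ v ∧ p.2 ≠ v}
  down_closed := fun hσ hτσ hne => ⟨hne, hσ.2.imp fun _ hv p hp => hv p (hτσ hp)⟩

def OmU (ts : List (Finset (Fin 3 × Fin 3))) : SC (Fin 3 × Fin 3) where
  faces := {σ | σ.Nonempty ∧ ∃ t ∈ ts, σ ⊆ t}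
  down_closed := fun hσ hτσ hne => ⟨hne, hσ.2.imp fun t ht => ⟨ht.1, hτσ.trans ht.2⟩⟩

def Om1 : SC (Fin 3 × Fin 3) := OmU [fct (0,1), fct (2,1), fct (2,0)]
def Om2 : SC (Fin 3 × Fin 3) := OmU [fct (0,2), fct (1,0), fct (1,2)]

set_option maxRecDepth 100000 in
set_option maxHeartbeats 4000000 in
lemma farber0 : IsFarber boundaryTwoSimplex Om0 := by
  refine ⟨?_, Prod.fst, ?_, Relation.ReflTransGen.single ?_⟩
  · intro σ hσ
    simp only [prodSC, boundaryTwoSimplex, Set.mem_setOf_eq,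
      Subsingleton.elim (Classical.decEq (Fin 3)) (instDecidableEqFin 3)]
    rw [Subsingleton.elim (Classical.decEq (Fin 3)) (instDecidableEqFin 3)]
    revert hσ
    show (σ.Nonempty ∧ ∃ v : Fin 3, ∀ p ∈ σ, p.1 ≠ v ∧ p.2 ≠ v) → _
    revert σ
    decide
  · intro σ hσ
    simp only [boundaryTwoSimplex, Set.mem_setOf_eq,
      Subsingleton.elim (Classical.decEq (Fin 3)) (instDecidableEqFin 3)]
    rw [Subsingleton.elim (Classical.decEq (Fin 3)) (instDecidableEqFin 3)]
    revert hσ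
    show (σ.Nonempty ∧ ∃ v : Fin 3, ∀ p ∈ σ, p.1 ≠ v ∧ p.2 ≠ v) → _
    revert σ
    decide
  · intro σ hσ
    simp only [prodSC, boundaryTwoSimplex, Set.mem_setOf_eq,
      Subsingleton.elim (Classical.decEq (Fin 3)) (instDecidableEqFin 3),
      Subsingleton.elim (Classical.decEq (Fin 3 × Fin 3))
        (instDecidableEqProd : DecidableEq (Fin 3 × Fin 3))]
    rw [Subsingleton.elim (Classical.decEq (Fin 3)) (instDecidableEqFin 3),
      Subsingleton.elim (Classical.decEq (Fin 3 × Fin 3))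
        (instDecidableEqProd : DecidableEq (Fin 3 × Fin 3))]
    revert hσ
    show (σ.Nonempty ∧ ∃ v : Fin 3, ∀ p ∈ σ, p.1 ≠ v ∧ p.2 ≠ v) → _
    revert σ
    decide

set_option maxRecDepth 100000 in
set_option maxHeartbeats 4000000 in
lemma farber1 : IsFarber boundaryTwoSimplex Om1 := by
  refine ⟨?_, fun _ => 1, ?_,
    Relation.ReflTransGen.head (b := fun _ => ((1 : Fin 3), (0 : Fin 3))) ?_
      (Relation.ReflTransGen.single ?_)⟩
  · intro σ hσ
    simp only [prodSC, boundaryTwoSimplex, Set.mem_setOf_eq,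
      Subsingleton.elim (Classical.decEq (Fin 3)) (instDecidableEqFin 3)]
    rw [Subsingleton.elim (Classical.decEq (Fin 3)) (instDecidableEqFin 3)]
    revert hσ
    show (σ.Nonempty ∧ ∃ t ∈ [fct (0,1), fct (2,1), fct (2,0)], σ ⊆ t) → _
    revert σ
    decide
  · intro σ hσ
    simp only [boundaryTwoSimplex, Set.mem_setOf_eq,
      Subsingleton.elim (Classical.decEq (Fin 3)) (instDecidableEqFin 3)]
    rw [Subsingleton.elim (Classical.decEq (Fin 3)) (instDecidableEqFin 3)]
    revert hσ
    show (σ.Nonempty ∧ ∃ t ∈ [fct (0,1), fct (2,1), fct (2,0)], σ ⊆ t) → _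
    revert σ
    decide
  · intro σ hσ
    simp only [prodSC, boundaryTwoSimplex, Set.mem_setOf_eq,
      Subsingleton.elim (Classical.decEq (Fin 3)) (instDecidableEqFin 3),
      Subsingleton.elim (Classical.decEq (Fin 3 × Fin 3))
        (instDecidableEqProd : DecidableEq (Fin 3 × Fin 3))]
    rw [Subsingleton.elim (Classical.decEq (Fin 3)) (instDecidableEqFin 3),
      Subsingleton.elim (Classical.decEq (Fin 3 × Fin 3))
        (instDecidableEqProd : DecidableEq (Fin 3 × Fin 3))]
    revert hσ
    show (σ.Nonempty ∧ ∃ t ∈ [fct (0,1), fct (2,1), fct (2,0)], σ ⊆ t) → _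
    revert σ
    decide
  · intro σ hσ
    simp only [prodSC, boundaryTwoSimplex, Set.mem_setOf_eq,
      Subsingleton.elim (Classical.decEq (Fin 3)) (instDecidableEqFin 3),
      Subsingleton.elim (Classical.decEq (Fin 3 × Fin 3))
        (instDecidableEqProd : DecidableEq (Fin 3 × Fin 3))]
    rw [Subsingleton.elim (Classical.decEq (Fin 3)) (instDecidableEqFin 3),
      Subsingleton.elim (Classical.decEq (Fin 3 × Fin 3))
        (instDecidableEqProd : DecidableEq (Fin 3 × Fin 3))]
    revert hσ
    show (σ.Nonempty ∧ ∃ t ∈ [fct (0,1), fct (2,1), fct (2,0)], σ ⊆ t) → _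
    revert σ
    decide

set_option maxRecDepth 100000 in
set_option maxHeartbeats 4000000 in
lemma farber2 : IsFarber boundaryTwoSimplex Om2 := by
  refine ⟨?_, fun _ => 0, ?_,
    Relation.ReflTransGen.head (b := fun _ => ((0 : Fin 3), (1 : Fin 3))) ?_
      (Relation.ReflTransGen.single ?_)⟩
  · intro σ hσ
    simp only [prodSC, boundaryTwoSimplex, Set.mem_setOf_eq,
      Subsingleton.elim (Classical.decEq (Fin 3)) (instDecidableEqFin 3)]
    rw [Subsingleton.elim (Classical.decEq (Fin 3)) (instDecidableEqFin 3)]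
    revert hσ
    show (σ.Nonempty ∧ ∃ t ∈ [fct (0,2), fct (1,0), fct (1,2)], σ ⊆ t) → _
    revert σ
    decide
  · intro σ hσ
    simp only [boundaryTwoSimplex, Set.mem_setOf_eq,
      Subsingleton.elim (Classical.decEq (Fin 3)) (instDecidableEqFin 3)]
    rw [Subsingleton.elim (Classical.decEq (Fin 3)) (instDecidableEqFin 3)]
    revert hσ
    show (σ.Nonempty ∧ ∃ t ∈ [fct (0,2), fct (1,0), fct (1,2)], σ ⊆ t) → _
    revert σ
    decide
  · intro σ hσ
    simp only [prodSC, boundaryTwoSimplex, Set.mem_setOf_eq,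
      Subsingleton.elim (Classical.decEq (Fin 3)) (instDecidableEqFin 3),
      Subsingleton.elim (Classical.decEq (Fin 3 × Fin 3))
        (instDecidableEqProd : DecidableEq (Fin 3 × Fin 3))]
    rw [Subsingleton.elim (Classical.decEq (Fin 3)) (instDecidableEqFin 3),
      Subsingleton.elim (Classical.decEq (Fin 3 × Fin 3))
        (instDecidableEqProd : DecidableEq (Fin 3 × Fin 3))]
    revert hσ
    show (σ.Nonempty ∧ ∃ t ∈ [fct (0,2), fct (1,0), fct (1,2)], σ ⊆ t) → _
    revert σ
    decide
  · intro σ hσ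
    simp only [prodSC, boundaryTwoSimplex, Set.mem_setOf_eq,
      Subsingleton.elim (Classical.decEq (Fin 3)) (instDecidableEqFin 3),
      Subsingleton.elim (Classical.decEq (Fin 3 × Fin 3))
        (instDecidableEqProd : DecidableEq (Fin 3 × Fin 3))]
    rw [Subsingleton.elim (Classical.decEq (Fin 3)) (instDecidableEqFin 3),
      Subsingleton.elim (Classical.decEq (Fin 3 × Fin 3))
        (instDecidableEqProd : DecidableEq (Fin 3 × Fin 3))]
    revert hσ
    show (σ.Nonempty ∧ ∃ t ∈ [fct (0,2), fct (1,0), fct (1,2)], σ ⊆ t) → _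
    revert σ
    decide

set_option maxRecDepth 100000 in
set_option maxHeartbeats 4000000 in
set_option synthInstance.maxSize 2000 in
lemma coverKey : ∀ σ : Finset (Fin 3 × Fin 3),
    ((Finset.image Prod.fst σ).Nonempty ∧ (Finset.image Prod.fst σ).card ≤ 2) ∧
      ((Finset.image Prod.snd σ).Nonempty ∧ (Finset.image Prod.snd σ).card ≤ 2) →
    (σ.Nonempty ∧ ∃ v : Fin 3, ∀ p ∈ σ, p.1 ≠ v ∧ p.2 ≠ v) ∨
    (σ.Nonempty ∧ ∃ t ∈ [fct (0,1), fct (2,1), fct (2,0)], σ ⊆ t) ∨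
    (σ.Nonempty ∧ ∃ t ∈ [fct (0,2), fct (1,0), fct (1,2)], σ ⊆ t) := by decide

lemma TCle2 : TCle boundaryTwoSimplex 2 := by
  refine ⟨![Om0, Om1, Om2], ?_, ?_⟩
  · intro i
    fin_cases i
    · exact farber0
    · exact farber1
    · exact farber2
  · intro σ hσ
    simp only [prodSC, boundaryTwoSimplex, Set.mem_setOf_eq,
      Subsingleton.elim (Classical.decEq (Fin 3)) (instDecidableEqFin 3)] at hσ
    rw [Subsingleton.elim (Classical.decEq (Fin 3)) (instDecidableEqFin 3)] at hσ
    rcases coverKey σ hσ with h | h | h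
    · exact ⟨0, h⟩
    · exact ⟨1, h⟩
    · exact ⟨2, h⟩

/-- `TC (∂Δ²) = 2`. -/
theorem TCdisc_boundaryTwoSimplex : TCdisc boundaryTwoSimplex = 2 := by
  unfold TCdisc
  apply le_antisymm
  · exact sInf_le ⟨2, by norm_num, TCle2⟩
  · apply le_sInf
    rintro n ⟨m, rfl, hm⟩
    rcases m with _ | _ | m
    · exact absurd (TCle_zero_one hm) notTCle1
    · exact absurd hm notTCle1
    · exact_mod_cast (show (2 : ℕ) ≤ m + 1 + 1 by omega)
end

section
/- If π : X → Y is a fibration (has the homotopy lifting property with respect to all spaces), then the homotopic Švarc genus equals the Švarc genus: hsecat(π) = secat(π). -/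
open unitInterval in
/-- `f` and `g` are homotopic: there is a continuous homotopy between them. -/
def Htpy {A B : Type} [TopologicalSpace A] [TopologicalSpace B] (f g : A → B) : Prop :=
  ∃ H : C(A × I, B), (∀ a, H (a, 0) = f a) ∧ (∀ a, H (a, 1) = g a)

/-- The Švarc genus of `f` is at most `n`: the codomain has an open cover by `n + 1`
sets each admitting a continuous strict local section. -/
def SecatLe {X Y : Type} [TopologicalSpace X] [TopologicalSpace Y] (f : X → Y) (n : ℕ) : Prop :=
  ∃ V : Fin (n + 1) → Set Y, (∀ i, IsOpen (V i)) ∧ (∀ y, ∃ i, y ∈ V i) ∧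
    ∀ i, ∃ s : (V i) → X, Continuous s ∧ ∀ y : V i, f (s y) = (y : Y)

/-- The homotopic Švarc genus of `f` is at most `n`: open cover by `n + 1` sets each
admitting a continuous local homotopic section. -/
def HSecatLe {X Y : Type} [TopologicalSpace X] [TopologicalSpace Y] (f : X → Y) (n : ℕ) : Prop :=
  ∃ V : Fin (n + 1) → Set Y, (∀ i, IsOpen (V i)) ∧ (∀ y, ∃ i, y ∈ V i) ∧
    ∀ i, ∃ s : (V i) → X, Continuous s ∧
      Htpy (fun y : V i => f (s y)) (fun y : V i => (y : Y))

/-- The Švarc genus. -/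
noncomputable def secat {X Y : Type} [TopologicalSpace X] [TopologicalSpace Y]
    (f : X → Y) : ℕ∞ :=
  sInf {n : ℕ∞ | ∃ m : ℕ, n = (m : ℕ∞) ∧ SecatLe f m}

/-- The homotopic Švarc genus. -/
noncomputable def hsecat {X Y : Type} [TopologicalSpace X] [TopologicalSpace Y]
    (f : X → Y) : ℕ∞ :=
  sInf {n : ℕ∞ | ∃ m : ℕ, n = (m : ℕ∞) ∧ HSecatLe f m}

open unitInterval in
/-- The homotopy lifting property with respect to all spaces. -/
def IsFibration {E B : Type} [TopologicalSpace E] [TopologicalSpace B] (p : E → B) : Prop :=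
  ∀ (Z : Type) (_ : TopologicalSpace Z) (H : C(Z × I, B)) (h : Z → E), Continuous h →
    (∀ z, p (h z) = H (z, 0)) →
    ∃ G : C(Z × I, E), (∀ z, G (z, 0) = h z) ∧ ∀ q, p (G q) = H q

open unitInterval in
/-- The path fibration `PX → X × X`, sending a path to its endpoints. -/
def pathFib (X : Type) [TopologicalSpace X] : C(I, X) → X × X :=
  fun γ => (γ 0, γ 1)

/-- Farber's (normalized) topological complexity of a space. -/
noncomputable def TCtop (X : Type) [TopologicalSpace X] : ℕ∞ :=
  secat (pathFib X)

/-- for a fibration, the homotopic Švarc genus equals the Švarc genus. -/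
theorem hsecat_eq_secat_of_fibration {X Y : Type} [TopologicalSpace X]
    [TopologicalSpace Y] (p : X → Y) (hp : Continuous p) (hfib : IsFibration p) :
    hsecat p = secat p := by
  have key : ∀ m, HSecatLe p m ↔ SecatLe p m := by
    intro m
    constructor
    · rintro ⟨V, hV, hcov, hsec⟩
      refine ⟨V, hV, hcov, fun i => ?_⟩
      obtain ⟨s, hs, H, h0, h1⟩ := hsec i
      obtain ⟨G, hG0, hGp⟩ := hfib (V i) inferInstance H s hs (fun z => (h0 z).symm)
      refine ⟨fun y => G (y, 1), ?_, fun y => by rw [hGp]; exact h1 y⟩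
      exact G.continuous.comp (continuous_id.prodMk continuous_const)
    · rintro ⟨V, hV, hcov, hsec⟩
      refine ⟨V, hV, hcov, fun i => ?_⟩
      obtain ⟨s, hs, hsec'⟩ := hsec i
      exact ⟨s, hs, ⟨⟨fun q => p (s q.1), by continuity⟩, fun a => rfl, fun a => hsec' a⟩⟩
  unfold hsecat secat
  congr 1
  ext n
  simp only [key]
end

section
/- Let X be a topological space and U ⊆ X × X an open subset. The following are equivalent: (1) there is a continuous section s : U → PX of the path fibration π : PX → X × X; (2) the restrictions to U of the two projections p₁, p₂ : X × X → X are homotopic; (3) p₁|_U (equivalently p₂|_U) is a homotopic section of the diagonal Δ_X : X → X × X, i.e., Δ_X∘(p₁|_U) is homotopic to the inclusion U ⊆ X × X. -/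
open unitInterval in
/-- equivalent conditions for an open `U ⊆ X × X`: a section of the
path fibration over `U` exists iff the two projections restricted to `U` are homotopic,
iff either projection restricted to `U` is a homotopic section of the diagonal. -/
theorem pathFib_section_iff (X : Type) [TopologicalSpace X] (U : Set (X × X))
    (hU : IsOpen U) :
    ((∃ s : U → C(I, X), Continuous s ∧ ∀ u : U, pathFib X (s u) = (u : X × X)) ↔
      Htpy (fun u : U => (u : X × X).1) (fun u : U => (u : X × X).2)) ∧
    ((∃ s : U → C(I, X), Continuous s ∧ ∀ u : U, pathFib X (s u) = (u : X × X)) ↔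
      Htpy (fun u : U => ((u : X × X).1, (u : X × X).1)) (fun u : U => (u : X × X))) ∧
    ((∃ s : U → C(I, X), Continuous s ∧ ∀ u : U, pathFib X (s u) = (u : X × X)) ↔
      Htpy (fun u : U => ((u : X × X).2, (u : X × X).2)) (fun u : U => (u : X × X))) := by
  refine ⟨⟨?_, ?_⟩, ⟨?_, ?_⟩, ⟨?_, ?_⟩⟩
  · -- section → p₁ ≃ p₂
    rintro ⟨s, hs, hsec⟩
    exact ⟨ContinuousMap.uncurry ⟨s, hs⟩,
      fun u => (Prod.ext_iff.mp (hsec u)).1,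
      fun u => (Prod.ext_iff.mp (hsec u)).2⟩
  · -- p₁ ≃ p₂ → section
    rintro ⟨H, h0, h1⟩
    refine ⟨fun u => H.curry u, H.curry.continuous, fun u => ?_⟩
    exact Prod.ext_iff.mpr ⟨h0 u, h1 u⟩
  · -- section → Δ∘p₁ ≃ incl
    rintro ⟨s, hs, hsec⟩
    refine ⟨⟨fun p => ((p.1 : X × X).1, s p.1 p.2),
      ((continuous_subtype_val.comp continuous_fst).fst).prodMk
        (ContinuousMap.uncurry ⟨s, hs⟩).continuous⟩, fun u => ?_, fun u => ?_⟩
    · exact Prod.ext_iff.mpr ⟨rfl, (Prod.ext_iff.mp (hsec u)).1⟩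
    · exact Prod.ext_iff.mpr ⟨rfl, (Prod.ext_iff.mp (hsec u)).2⟩
  · -- Δ∘p₁ ≃ incl → section
    rintro ⟨H, h0, h1⟩
    refine ⟨fun u => (⟨fun p => (H p).2, continuous_snd.comp H.continuous⟩ :
        C(U × I, X)).curry u, (ContinuousMap.curry _).continuous, fun u => ?_⟩
    exact Prod.ext_iff.mpr ⟨(Prod.ext_iff.mp (h0 u)).2, (Prod.ext_iff.mp (h1 u)).2⟩
  · -- section → Δ∘p₂ ≃ incl
    rintro ⟨s, hs, hsec⟩
    refine ⟨⟨fun p => (s p.1 (σ p.2), (p.1 : X × X).2),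
      ((ContinuousMap.uncurry ⟨s, hs⟩).continuous.comp
        (continuous_fst.prodMk (continuous_symm.comp continuous_snd))).prodMk
        ((continuous_subtype_val.comp continuous_fst).snd)⟩, fun u => ?_, fun u => ?_⟩
    · show (s u (σ 0), (u : X × X).2) = _
      rw [symm_zero]
      exact Prod.ext_iff.mpr ⟨(Prod.ext_iff.mp (hsec u)).2, rfl⟩
    · show (s u (σ 1), (u : X × X).2) = _
      rw [symm_one]
      exact Prod.ext_iff.mpr ⟨(Prod.ext_iff.mp (hsec u)).1, rfl⟩
  · -- Δ∘p₂ ≃ incl → section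
    rintro ⟨H, h0, h1⟩
    refine ⟨fun u => (⟨fun p => (H (p.1, σ p.2)).1,
        (continuous_fst.comp (H.continuous.comp
          (continuous_fst.prodMk (continuous_symm.comp continuous_snd))))⟩ :
        C(U × I, X)).curry u, (ContinuousMap.curry _).continuous, fun u => ?_⟩
    show ((H (u, σ 0)).1, (H (u, σ 1)).1) = _
    rw [symm_zero, symm_one]
    exact Prod.ext_iff.mpr ⟨(Prod.ext_iff.mp (h1 u)).1, (Prod.ext_iff.mp (h0 u)).1⟩
end

section
/- For any finite abstract simplicial complex K, the topological complexity of the geometric realization satisfies TC(|K|) ≤ TC(K), where the right-hand side is the discrete topological complexity. -/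
attribute [local instance] Classical.decEq

/-- The geometric realization of a finite abstract simplicial complex `K`,
as a subspace of `V → ℝ`. -/
def geomReal {V : Type} [Fintype V] (K : SC V) : Set (V → ℝ) :=
  {f | (∀ v, 0 ≤ f v) ∧ (∑ v, f v) = 1 ∧ ∃ σ ∈ K.faces, ∀ v, f v ≠ 0 → v ∈ σ}

namespace TCaux

open Finset
set_option linter.unusedSectionVars false
set_option linter.unusedVariables false


variable {V A B : Type} [Fintype V] [Fintype A] [Fintype B]

/-- marginals -/
def mrg1 (h : V × V → ℝ) : V → ℝ := fun v => ∑ w, h (v, w)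
def mrg2 (h : V × V → ℝ) : V → ℝ := fun v => ∑ w, h (w, v)
/-- tensor -/
def tens (f g : V → ℝ) : V × V → ℝ := fun p => f p.1 * g p.2
/-- realization of a vertex map -/
noncomputable def rel (c : A → B) (h : A → ℝ) : B → ℝ :=
  fun b => ∑ a ∈ Finset.univ.filter (fun a => c a = b), h a

lemma sum_rel (c : A → B) (h : A → ℝ) : ∑ b, rel c h b = ∑ a, h a :=
  Finset.sum_fiberwise_of_maps_to (fun a _ => mem_univ _) h

lemma rel_nonneg {c : A → B} {h : A → ℝ} (hh : ∀ a, 0 ≤ h a) (b : B) : 0 ≤ rel c h b :=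
  Finset.sum_nonneg fun a _ => hh a

lemma rel_ne_zero {c : A → B} {h : A → ℝ} {b : B} (hb : rel c h b ≠ 0) :
    ∃ a, c a = b ∧ h a ≠ 0 := by
  obtain ⟨a, ha, hne⟩ := Finset.exists_ne_zero_of_sum_ne_zero hb
  exact ⟨a, (Finset.mem_filter.1 ha).2, hne⟩

lemma rel_id (h : A → ℝ) : rel id h = h := by
  funext p
  simp [rel, Finset.sum_filter, Finset.sum_ite_eq']

lemma continuous_rel (c : A → B) : Continuous (rel c : (A → ℝ) → B → ℝ) :=
  continuous_pi fun b => continuous_finset_sum _ fun a _ => continuous_apply a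

lemma continuous_mrg1 : Continuous (mrg1 (V := V)) :=
  continuous_pi fun v => continuous_finset_sum _ fun w _ => continuous_apply (v, w)

lemma continuous_mrg2 : Continuous (mrg2 (V := V)) :=
  continuous_pi fun v => continuous_finset_sum _ fun w _ => continuous_apply (w, v)

lemma continuous_tens : Continuous (fun z : (V → ℝ) × (V → ℝ) => tens z.1 z.2) :=
  continuous_pi fun p =>
    ((continuous_apply p.1).comp continuous_fst).mul ((continuous_apply p.2).comp continuous_snd)

lemma sum_tens {f g : V → ℝ} (hf : ∑ v, f v = 1) (hg : ∑ v, g v = 1) :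
    ∑ p, tens f g p = 1 := by
  rw [Fintype.sum_prod_type]
  simp only [tens]
  rw [← Finset.sum_mul_sum]
  rw [hf, hg, one_mul]

lemma mrg1_tens {f g : V → ℝ} (hg : ∑ v, g v = 1) : mrg1 (tens f g) = f := by
  funext v
  simp only [mrg1, tens, ← Finset.mul_sum]
  rw [hg, mul_one]

lemma mrg2_tens {f g : V → ℝ} (hf : ∑ v, f v = 1) : mrg2 (tens f g) = g := by
  funext v
  simp only [mrg2, tens, ← Finset.sum_mul]
  rw [hf, one_mul]

lemma mrg1_rel (c : V × V → V × V) (h : V × V → ℝ) :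
    mrg1 (rel c h) = rel (fun q => (c q).1) h := by
  funext v
  simp only [mrg1, rel]
  rw [← Finset.sum_fiberwise_of_maps_to (t := Finset.univ)
    (g := fun q => (c q).2) (fun a _ => mem_univ _) h]
  refine Finset.sum_congr rfl fun w _ => Finset.sum_congr ?_ fun _ _ => rfl
  rw [Finset.filter_filter]
  ext a
  simp [Prod.ext_iff]

lemma mrg2_rel (c : V × V → V × V) (h : V × V → ℝ) :
    mrg2 (rel c h) = rel (fun q => (c q).2) h := by
  funext v
  simp only [mrg2, rel]
  rw [← Finset.sum_fiberwise_of_maps_to (t := Finset.univ)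
    (g := fun q => (c q).1) (fun a _ => mem_univ _) h]
  refine Finset.sum_congr rfl fun w _ => Finset.sum_congr ?_ fun _ _ => rfl
  rw [Finset.filter_filter]
  ext a
  simp [Prod.ext_iff, and_comm]

lemma exists_ne_zero {h : A → ℝ} (h1 : ∑ a, h a = 1) : ∃ a, h a ≠ 0 := by
  by_contra hc
  push_neg at hc
  rw [Finset.sum_congr rfl (fun a _ => hc a)] at h1
  simp at h1

lemma tens_mem {K : SC V} {f g : V → ℝ} (hf : f ∈ geomReal K) (hg : g ∈ geomReal K) :
    tens f g ∈ geomReal (prodSC K K) := by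
  obtain ⟨hf0, hf1, σ, hσ, hfs⟩ := hf
  obtain ⟨hg0, hg1, τ, hτ, hgs⟩ := hg
  obtain ⟨v, hv⟩ := exists_ne_zero hf1
  obtain ⟨w, hw⟩ := exists_ne_zero hg1
  have hσne : σ.Nonempty := ⟨v, hfs v hv⟩
  have hτne : τ.Nonempty := ⟨w, hgs w hw⟩
  refine ⟨fun p => mul_nonneg (hf0 p.1) (hg0 p.2), sum_tens hf1 hg1, σ ×ˢ τ, ⟨?_, ?_⟩, ?_⟩
  · refine K.down_closed hσ ?_ ?_
    · intro x hx
      obtain ⟨p, hp, rfl⟩ := Finset.mem_image.1 hx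
      exact (Finset.mem_product.1 hp).1
    · exact (hσne.product hτne).image _
  · refine K.down_closed hτ ?_ ?_
    · intro x hx
      obtain ⟨p, hp, rfl⟩ := Finset.mem_image.1 hx
      exact (Finset.mem_product.1 hp).2
    · exact (hσne.product hτne).image _
  · intro p hp
    rw [Finset.mem_product]
    have := mul_ne_zero_iff.1 hp
    exact ⟨hfs _ this.1, hgs _ this.2⟩

lemma mrg1_mem {K : SC V} {h : V × V → ℝ} (hh : h ∈ geomReal (prodSC K K)) :
    mrg1 h ∈ geomReal K := by
  obtain ⟨h0, h1, σ, hσ, hs⟩ := hh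
  refine ⟨fun v => Finset.sum_nonneg fun w _ => h0 _, ?_, σ.image Prod.fst, hσ.1, ?_⟩
  · rw [show ∑ v, mrg1 h v = ∑ p, h p from (Fintype.sum_prod_type _).symm, h1]
  · intro v hv
    obtain ⟨w, _, hw⟩ := Finset.exists_ne_zero_of_sum_ne_zero hv
    exact Finset.mem_image.2 ⟨(v, w), hs _ hw, rfl⟩

lemma mrg2_mem {K : SC V} {h : V × V → ℝ} (hh : h ∈ geomReal (prodSC K K)) :
    mrg2 h ∈ geomReal K := by
  obtain ⟨h0, h1, σ, hσ, hs⟩ := hh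
  refine ⟨fun v => Finset.sum_nonneg fun w _ => h0 _, ?_, σ.image Prod.snd, hσ.2, ?_⟩
  · rw [show ∑ v, mrg2 h v = ∑ p, h p from (Fintype.sum_prod_type_right _).symm, h1]
  · intro v hv
    obtain ⟨w, _, hw⟩ := Finset.exists_ne_zero_of_sum_ne_zero hv
    exact Finset.mem_image.2 ⟨(w, v), hs _ hw, rfl⟩

/-- weak simpliciality -/
def WS (M : SC A) (N : SC B) (c : A → B) : Prop := ∀ σ ∈ M.faces, σ.image c ∈ N.faces

lemma rel_mem {M : SC A} {N : SC B} {c : A → B} (hc : WS M N c) {h : A → ℝ}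
    (hh : h ∈ geomReal M) : rel c h ∈ geomReal N := by
  obtain ⟨h0, h1, σ, hσ, hs⟩ := hh
  refine ⟨rel_nonneg h0, by rw [sum_rel, h1], σ.image c, hc σ hσ, fun b hb => ?_⟩
  obtain ⟨a, rfl, ha⟩ := rel_ne_zero hb
  exact Finset.mem_image_of_mem c (hs a ha)

lemma geomReal_mono {M N : SC A} (h : M.faces ⊆ N.faces) : geomReal M ⊆ geomReal N :=
  fun _ ⟨a, b, σ, hσ, hs⟩ => ⟨a, b, σ, h hσ, hs⟩

noncomputable def relC (M : SC A) (N : SC B) (c : A → B) (hc : WS M N c) :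
    C(↥(geomReal M), ↥(geomReal N)) :=
  ⟨fun h => ⟨rel c h.1, rel_mem hc h.2⟩,
    ((continuous_rel c).comp continuous_subtype_val).subtype_mk _⟩

noncomputable def inclC {M N : SC A} (h : M.faces ⊆ N.faces) :
    C(↥(geomReal M), ↥(geomReal N)) :=
  ⟨fun x => ⟨x.1, geomReal_mono h x.2⟩, continuous_subtype_val.subtype_mk _⟩

lemma relC_id {M N : SC A} (hsub : M.faces ⊆ N.faces) (hid : WS M N id) :
    relC M N id hid = inclC hsub := by
  apply ContinuousMap.ext
  intro x
  apply Subtype.ext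
  exact rel_id x.1

noncomputable def SLhtpy {M N : SC A} {b d : A → A} (hb : WS M N b) (hd : WS M N d)
    (hcd : Contiguous M N b d) :
    ContinuousMap.Homotopy (relC M N b hb) (relC M N d hd) where
  toFun := fun q =>
    ⟨fun p => (1 - (q.1 : ℝ)) * rel b q.2.1 p + (q.1 : ℝ) * rel d q.2.1 p, by
      obtain ⟨h0, h1, σ, hσ, hs⟩ := q.2.2
      have ht0 : (0 : ℝ) ≤ (q.1 : ℝ) := q.1.2.1
      have ht1 : (0 : ℝ) ≤ 1 - (q.1 : ℝ) := sub_nonneg.2 q.1.2.2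
      refine ⟨fun p => add_nonneg (mul_nonneg ht1 (rel_nonneg h0 p))
          (mul_nonneg ht0 (rel_nonneg h0 p)), ?_,
        σ.image b ∪ σ.image d, hcd σ hσ, fun p hp => ?_⟩
      · rw [Finset.sum_add_distrib, ← Finset.mul_sum, ← Finset.mul_sum, sum_rel, sum_rel, h1]
        ring
      · have : (1 - (q.1 : ℝ)) * rel b q.2.1 p ≠ 0 ∨ (q.1 : ℝ) * rel d q.2.1 p ≠ 0 := by
          by_contra hc
          push_neg at hc
          apply hp
          simp [hc.1, hc.2]
        rcases this with h' | h'
        · obtain ⟨a, rfl, ha⟩ := rel_ne_zero (mul_ne_zero_iff.1 h').2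
          exact Finset.mem_union_left _ (Finset.mem_image_of_mem b (hs a ha))
        · obtain ⟨a, rfl, ha⟩ := rel_ne_zero (mul_ne_zero_iff.1 h').2
          exact Finset.mem_union_right _ (Finset.mem_image_of_mem d (hs a ha))⟩
  continuous_toFun := by
    refine Continuous.subtype_mk ?_ _
    refine continuous_pi fun p => ?_
    have hbc : Continuous fun q : unitInterval × ↥(geomReal M) => rel b q.2.1 p :=
      (continuous_apply p).comp ((continuous_rel b).comp
        (continuous_subtype_val.comp continuous_snd))
    have hdc : Continuous fun q : unitInterval × ↥(geomReal M) => rel d q.2.1 p :=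
      (continuous_apply p).comp ((continuous_rel d).comp
        (continuous_subtype_val.comp continuous_snd))
    have htc : Continuous fun q : unitInterval × ↥(geomReal M) => (q.1 : ℝ) :=
      continuous_subtype_val.comp continuous_fst
    exact ((continuous_const.sub htc).mul hbc).add (htc.mul hdc)
  map_zero_left := fun x => by
    apply Subtype.ext
    funext p
    simp [relC]
  map_one_left := fun x => by
    apply Subtype.ext
    funext p
    simp [relC]

lemma chain_htpy {M N : SC A} (hsub : M.faces ⊆ N.faces) {c d : A → A}
    (hcd : ContigClass M N c d) :
    ∀ hd : WS M N d, ∃ hc : WS M N c,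
      Nonempty (ContinuousMap.Homotopy (relC M N c hc) (relC M N d hd)) := by
  induction hcd with
  | refl => exact fun hd => ⟨hd, ⟨ContinuousMap.Homotopy.refl _⟩⟩
  | @tail b e _ hbe ih =>
    intro he
    have hb : WS M N b := by
      intro σ hσ
      rcases σ.eq_empty_or_nonempty with rfl | hne
      · simpa using hsub hσ
      · exact N.down_closed (hbe σ hσ) Finset.subset_union_left (hne.image b)
    obtain ⟨hc, ⟨H⟩⟩ := ih hb
    exact ⟨hc, ⟨H.trans (SLhtpy hb he hbe)⟩⟩


noncomputable def faceF (M : SC A) : Finset (Finset A) := (Set.toFinite M.faces).toFinset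

lemma mem_faceF {M : SC A} {τ : Finset A} : τ ∈ faceF M ↔ τ ∈ M.faces :=
  Set.Finite.mem_toFinset _

noncomputable def tsf (M : SC A) (hF : (faceF M).Nonempty) (h : A → ℝ) : ℝ :=
  (faceF M).inf' hF (fun τ => ∑ q ∈ τᶜ, max (h q) 0)

lemma tsf_nonneg {M : SC A} (hF : (faceF M).Nonempty) (h : A → ℝ) : 0 ≤ tsf M hF h :=
  Finset.le_inf' _ _ fun τ _ => Finset.sum_nonneg fun q _ => le_max_right _ _

lemma tsf_continuous (M : SC A) (hF : (faceF M).Nonempty) : Continuous (tsf M hF) :=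
  Continuous.finset_inf'_apply hF fun τ _ =>
    continuous_finset_sum _ fun q _ => (continuous_apply q).max continuous_const

lemma tsf_le {M : SC A} (hF : (faceF M).Nonempty) {τ : Finset A} (hτ : τ ∈ M.faces)
    (h : A → ℝ) : tsf M hF h ≤ ∑ q ∈ τᶜ, max (h q) 0 :=
  Finset.inf'_le _ (mem_faceF.2 hτ)

lemma tsf_le_zero {M : SC A} (hF : (faceF M).Nonempty) {h : A → ℝ} {σ : Finset A}
    (hσ : σ ∈ M.faces) (hs : ∀ q, h q ≠ 0 → q ∈ σ) : tsf M hF h ≤ 0 := by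
  refine le_trans (tsf_le hF hσ h) (le_of_eq (Finset.sum_eq_zero fun q hq => ?_))
  have : h q = 0 := by
    by_contra hc
    exact (Finset.mem_compl.1 hq) (hs q hc)
  simp [this]

lemma exists_min_face {M : SC A} (hF : (faceF M).Nonempty) (h : A → ℝ) :
    ∃ τ ∈ M.faces, tsf M hF h = ∑ q ∈ τᶜ, max (h q) 0 := by
  obtain ⟨τ, hτ, he⟩ := Finset.exists_mem_eq_inf' hF (fun τ => ∑ q ∈ τᶜ, max (h q) 0)
  exact ⟨τ, mem_faceF.1 hτ, he⟩

noncomputable def numf (M : SC A) (hF : (faceF M).Nonempty) (z : (A → ℝ) × ℝ) : A → ℝ :=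
  fun p => max (z.1 p - z.2 * tsf M hF z.1) 0

noncomputable def denf (M : SC A) (hF : (faceF M).Nonempty) (z : (A → ℝ) × ℝ) : ℝ :=
  ∑ p, numf M hF z p

noncomputable def Dh (M : SC A) (hF : (faceF M).Nonempty) (z : (A → ℝ) × ℝ) : A → ℝ :=
  fun p => numf M hF z p / denf M hF z

lemma continuous_numf (M : SC A) (hF : (faceF M).Nonempty) : Continuous (numf M hF) :=
  continuous_pi fun p =>
    (((continuous_apply p).comp continuous_fst).sub
      (continuous_snd.mul ((tsf_continuous M hF).comp continuous_fst))).max continuous_const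

lemma continuous_denf (M : SC A) (hF : (faceF M).Nonempty) : Continuous (denf M hF) :=
  continuous_finset_sum _ fun p _ => (continuous_apply p).comp (continuous_numf M hF)

lemma numf_nonneg (M : SC A) (hF : (faceF M).Nonempty) (z : (A → ℝ) × ℝ) (p : A) :
    0 ≤ numf M hF z p := le_max_right _ _

lemma denf_pos {M : SC A} {hF : (faceF M).Nonempty} {h : A → ℝ} {t : ℝ}
    (hq : ∃ q, tsf M hF h < h q) (ht0 : 0 ≤ t) (ht1 : t ≤ 1) : 0 < denf M hF (h, t) := by
  obtain ⟨q, hq⟩ := hq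
  have hts : 0 ≤ tsf M hF h := tsf_nonneg hF h
  have h1 : 0 < h q - t * tsf M hF h := by nlinarith
  have h2 : 0 < numf M hF (h, t) q := lt_of_lt_of_le h1 (le_max_left _ _)
  exact lt_of_lt_of_le h2 (Finset.single_le_sum (fun p _ => numf_nonneg M hF _ p) (mem_univ q))

lemma Dh_supp {M : SC A} {hF : (faceF M).Nonempty} {h : A → ℝ} {t : ℝ}
    (ht0 : 0 ≤ t) {p : A} (hp : Dh M hF (h, t) p ≠ 0) : t * tsf M hF h < h p := by
  have hn : numf M hF (h, t) p ≠ 0 := fun hz => hp (by simp [Dh, hz])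
  have : 0 < h p - t * tsf M hF h := by
    by_contra hc
    push_neg at hc
    exact hn (max_eq_right hc)
  linarith

lemma Dh_mem {M N' : SC A} {hF : (faceF M).Nonempty} {h : A → ℝ} {t : ℝ}
    (hh : h ∈ geomReal N') (hq : ∃ q, tsf M hF h < h q) (ht0 : 0 ≤ t) (ht1 : t ≤ 1) :
    Dh M hF (h, t) ∈ geomReal N' := by
  obtain ⟨h0, h1, σ, hσ, hs⟩ := hh
  have hden := denf_pos hq ht0 ht1
  refine ⟨fun p => div_nonneg (numf_nonneg M hF _ p) hden.le, ?_, σ, hσ, fun p hp => ?_⟩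
  · simp only [Dh]
    rw [← Finset.sum_div]
    exact div_self hden.ne'
  · refine hs p ?_
    have := Dh_supp ht0 hp
    have hts : 0 ≤ tsf M hF h := tsf_nonneg hF h
    intro hz
    rw [hz] at this
    nlinarith

lemma Dh_zero {M : SC A} {hF : (faceF M).Nonempty} {h : A → ℝ}
    (hnn : ∀ p, 0 ≤ h p) (hsum : ∑ p, h p = 1) : Dh M hF (h, 0) = h := by
  have hnum : numf M hF (h, 0) = h := by
    funext p
    simp [numf, max_eq_left (hnn p)]
  funext p
  rw [Dh, denf, hnum, hsum, div_one]

lemma Dh_one_mem {M : SC A} {hF : (faceF M).Nonempty} {h : A → ℝ}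
    (hq : ∃ q, tsf M hF h < h q) (hnn : ∀ p, 0 ≤ h p) (hsum : ∑ p, h p = 1) :
    Dh M hF (h, 1) ∈ geomReal M := by
  obtain ⟨τ, hτ, he⟩ := exists_min_face hF h
  have hden := denf_pos hq zero_le_one le_rfl
  obtain ⟨q, hq'⟩ := hq
  have hts : 0 ≤ tsf M hF h := tsf_nonneg hF h
  have hsub : Finset.univ.filter (fun p => tsf M hF h < h p) ⊆ τ := by
    intro p hp
    rw [Finset.mem_filter] at hp
    by_contra hpτ
    have h2 : max (h p) 0 ≤ tsf M hF h := by
      rw [he]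
      exact Finset.single_le_sum (f := fun r => max (h r) 0)
        (fun r _ => le_max_right _ _) (Finset.mem_compl.2 hpτ)
    have := le_trans (le_max_left (h p) 0) h2
    linarith [hp.2]
  refine ⟨fun p => div_nonneg (numf_nonneg M hF _ p) hden.le, ?_, _,
    M.down_closed hτ hsub ⟨q, Finset.mem_filter.2 ⟨mem_univ q, hq'⟩⟩, fun p hp => ?_⟩
  · simp only [Dh]
    rw [← Finset.sum_div]
    exact div_self hden.ne'
  · have := Dh_supp zero_le_one hp
    rw [one_mul] at this
    exact Finset.mem_filter.2 ⟨mem_univ p, this⟩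

section Farber

variable {V : Type} [Fintype V]

noncomputable def M1C (K : SC V) : C(↥(geomReal (prodSC K K)), ↥(geomReal K)) :=
  ⟨fun h => ⟨mrg1 h.1, mrg1_mem h.2⟩,
    (continuous_mrg1.comp continuous_subtype_val).subtype_mk _⟩

noncomputable def M2C (K : SC V) : C(↥(geomReal (prodSC K K)), ↥(geomReal K)) :=
  ⟨fun h => ⟨mrg2 h.1, mrg2_mem h.2⟩,
    (continuous_mrg2.comp continuous_subtype_val).subtype_mk _⟩

noncomputable def uf (K : SC V) (x : ↥(geomReal K) × ↥(geomReal K)) : V × V → ℝ :=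
  tens x.1.1 x.2.1

lemma uf_cont (K : SC V) : Continuous (uf K) :=
  continuous_tens.comp ((continuous_subtype_val.comp continuous_fst).prodMk
    (continuous_subtype_val.comp continuous_snd))

lemma uf_mem (K : SC V) (x : ↥(geomReal K) × ↥(geomReal K)) :
    uf K x ∈ geomReal (prodSC K K) := tens_mem x.1.2 x.2.2

noncomputable def UmapC (K : SC V) :
    C(↥(geomReal K) × ↥(geomReal K), ↥(geomReal (prodSC K K))) :=
  ⟨fun x => ⟨uf K x, uf_mem K x⟩, (uf_cont K).subtype_mk _⟩

variable (K : SC V) (Ω : SC (V × V)) (hne : (faceF Ω).Nonempty)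

noncomputable def Uset : Set (↥(geomReal K) × ↥(geomReal K)) :=
  {x | ∃ q, tsf Ω hne (uf K x) < uf K x q}

lemma Uset_open : IsOpen (Uset K Ω hne) := by
  have : Uset K Ω hne = ⋃ q, {x | tsf Ω hne (uf K x) < uf K x q} := by
    ext x; simp [Uset]
  rw [this]
  exact isOpen_iUnion fun q => isOpen_lt ((tsf_continuous Ω hne).comp (uf_cont K))
    ((continuous_apply q).comp (uf_cont K))

lemma Uset_mem {x : ↥(geomReal K) × ↥(geomReal K)} (hx : uf K x ∈ geomReal Ω) :
    x ∈ Uset K Ω hne := by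
  obtain ⟨h0, h1, σ, hσ, hs⟩ := hx
  have hle : tsf Ω hne (uf K x) ≤ 0 := tsf_le_zero hne hσ hs
  obtain ⟨q, hq⟩ := exists_ne_zero h1
  exact ⟨q, lt_of_le_of_lt hle (lt_of_le_of_ne (h0 q) (Ne.symm hq))⟩

noncomputable def rC : C(↥(Uset K Ω hne), ↥(geomReal Ω)) :=
  ⟨fun y => ⟨Dh Ω hne (uf K y.1, 1),
      Dh_one_mem y.2 (uf_mem K y.1).1 (uf_mem K y.1).2.1⟩, by
    refine Continuous.subtype_mk ?_ _
    refine continuous_pi fun p => ?_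
    have hΦ : Continuous fun y : ↥(Uset K Ω hne) => (uf K y.1, (1 : ℝ)) :=
      ((uf_cont K).comp continuous_subtype_val).prodMk continuous_const
    exact (((continuous_apply p).comp ((continuous_numf Ω hne).comp hΦ)).div
      ((continuous_denf Ω hne).comp hΦ)
      fun y => (denf_pos y.2 zero_le_one le_rfl).ne')⟩

noncomputable def toYN (q : unitInterval × ↥(Uset K Ω hne)) :
    ↥(geomReal (prodSC K K)) :=
  ⟨Dh Ω hne (uf K q.2.1, (q.1 : ℝ)), Dh_mem (uf_mem K q.2.1) q.2.2 q.1.2.1 q.1.2.2⟩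

lemma toYN_cont : Continuous (toYN K Ω hne) := by
  refine Continuous.subtype_mk ?_ _
  refine continuous_pi fun p => ?_
  have hΦ : Continuous fun q : unitInterval × ↥(Uset K Ω hne) =>
      (uf K q.2.1, (q.1 : ℝ)) :=
    ((uf_cont K).comp (continuous_subtype_val.comp continuous_snd)).prodMk
      (continuous_subtype_val.comp continuous_fst)
  exact (((continuous_apply p).comp ((continuous_numf Ω hne).comp hΦ)).div
    ((continuous_denf Ω hne).comp hΦ)
    fun q => (denf_pos q.2.2 q.1.2.1 q.1.2.2).ne')

noncomputable def inclU : C(↥(Uset K Ω hne), ↥(geomReal K) × ↥(geomReal K)) :=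
  ⟨Subtype.val, continuous_subtype_val⟩

noncomputable def HtpyU (hsub : Ω.faces ⊆ (prodSC K K).faces)
    (Mc : C(↥(geomReal (prodSC K K)), ↥(geomReal K))) :
    ContinuousMap.Homotopy (Mc.comp ((UmapC K).comp (inclU K Ω hne)))
      (Mc.comp ((inclC hsub).comp (rC K Ω hne))) where
  toFun q := Mc (toYN K Ω hne q)
  continuous_toFun := Mc.continuous.comp (toYN_cont K Ω hne)
  map_zero_left x := by
    refine congrArg Mc (Subtype.ext ?_)
    exact Dh_zero (uf_mem K x.1).1 (uf_mem K x.1).2.1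
  map_one_left x := congrArg Mc (Subtype.ext rfl)

noncomputable def pr1C : C(↥(Uset K Ω hne), ↥(geomReal K)) :=
  ⟨fun y => y.1.1, continuous_fst.comp continuous_subtype_val⟩

noncomputable def pr2C : C(↥(Uset K Ω hne), ↥(geomReal K)) :=
  ⟨fun y => y.1.2, continuous_snd.comp continuous_subtype_val⟩

lemma M1_U : (M1C K).comp ((UmapC K).comp (inclU K Ω hne)) = pr1C K Ω hne := by
  apply ContinuousMap.ext
  intro y
  apply Subtype.ext
  exact mrg1_tens y.1.2.2.2.1

lemma M2_U : (M2C K).comp ((UmapC K).comp (inclU K Ω hne)) = pr2C K Ω hne := by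
  apply ContinuousMap.ext
  intro y
  apply Subtype.ext
  exact mrg2_tens y.1.1.2.2.1

end Farber

open ContinuousMap in
lemma farber_section {V : Type} [Fintype V] (K : SC V) (Ω : SC (V × V))
    (hFar : IsFarber K Ω) :
    ∃ U : Set (↥(geomReal K) × ↥(geomReal K)), IsOpen U ∧
      (∀ x : ↥(geomReal K) × ↥(geomReal K), tens x.1.1 x.2.1 ∈ geomReal Ω → x ∈ U) ∧
      ∃ s : ↥U → C(unitInterval, ↥(geomReal K)), Continuous s ∧
        ∀ y : ↥U, pathFib ↥(geomReal K) (s y) = ↑y := by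
  by_cases hne : (faceF Ω).Nonempty
  · obtain ⟨hsub, smap, hsimp, hcc⟩ := hFar
    have hwid : WS Ω (prodSC K K) id := fun σ hσ => by simpa using hsub hσ
    obtain ⟨hwΔ, ⟨Hch⟩⟩ := chain_htpy hsub hcc hwid
    have midEq : (M1C K).comp ((relC Ω (prodSC K K) (fun p => (smap p, smap p)) hwΔ).comp
        (rC K Ω hne)) = (M2C K).comp ((relC Ω (prodSC K K) (fun p => (smap p, smap p)) hwΔ).comp
        (rC K Ω hne)) := by
      apply ContinuousMap.ext
      intro y
      apply Subtype.ext
      show mrg1 (rel (fun p => (smap p, smap p)) _) = mrg2 (rel (fun p => (smap p, smap p)) _)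
      rw [mrg1_rel, mrg2_rel]
    have H1 : ContinuousMap.Homotopy (pr1C K Ω hne)
        ((M1C K).comp ((inclC hsub).comp (rC K Ω hne))) :=
      (HtpyU K Ω hne hsub (M1C K)).cast (M1_U K Ω hne) rfl
    have H2 : ContinuousMap.Homotopy ((M1C K).comp ((inclC hsub).comp (rC K Ω hne)))
        ((M1C K).comp ((relC Ω (prodSC K K) (fun p => (smap p, smap p)) hwΔ).comp
          (rC K Ω hne))) :=
      ((ContinuousMap.Homotopy.refl (M1C K)).comp
        (Hch.symm.comp (ContinuousMap.Homotopy.refl (rC K Ω hne)))).cast (by rw [relC_id hsub hwid]) rfl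
    have H3 : ContinuousMap.Homotopy ((M2C K).comp
        ((relC Ω (prodSC K K) (fun p => (smap p, smap p)) hwΔ).comp (rC K Ω hne)))
        ((M2C K).comp ((inclC hsub).comp (rC K Ω hne))) :=
      ((ContinuousMap.Homotopy.refl (M2C K)).comp
        (Hch.comp (ContinuousMap.Homotopy.refl (rC K Ω hne)))).cast rfl (by rw [relC_id hsub hwid])
    have H4 : ContinuousMap.Homotopy ((M2C K).comp ((inclC hsub).comp (rC K Ω hne)))
        (pr2C K Ω hne) :=
      ((HtpyU K Ω hne hsub (M2C K)).cast (M2_U K Ω hne) rfl).symm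
    have G : ContinuousMap.Homotopy (pr1C K Ω hne) (pr2C K Ω hne) :=
      H1.trans (H2.trans ((H3.cast midEq.symm rfl).trans H4))
    refine ⟨Uset K Ω hne, Uset_open K Ω hne, fun x hx => Uset_mem K Ω hne hx, ?_⟩
    refine ⟨fun y => (G.toContinuousMap.comp ContinuousMap.prodSwap).curry y,
      (ContinuousMap.continuous _), fun y => ?_⟩
    exact Prod.ext (G.apply_zero y) (G.apply_one y)
  · refine ⟨∅, isOpen_empty, fun x hx => ?_, fun y => absurd y.2 (Set.notMem_empty _), ?_, ?_⟩
    · obtain ⟨_, _, σ, hσ, _⟩ := hx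
      exact absurd ⟨σ, mem_faceF.2 hσ⟩ hne
    · exact continuous_iff_continuousAt.2 fun y => absurd y.2 (Set.notMem_empty _)
    · intro y
      exact absurd y.2 (Set.notMem_empty _)

lemma fsupp_face {K : SC V} {f : V → ℝ} (hf : f ∈ geomReal K) :
    Finset.univ.filter (fun v => f v ≠ 0) ∈ K.faces := by
  obtain ⟨h0, h1, σ, hσ, hs⟩ := hf
  obtain ⟨v, hv⟩ := exists_ne_zero h1
  exact K.down_closed hσ (fun w hw => hs w (Finset.mem_filter.1 hw).2)
    ⟨v, Finset.mem_filter.2 ⟨mem_univ v, hv⟩⟩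

lemma supp_prod_face {K : SC V} {f g : V → ℝ} (hf : f ∈ geomReal K) (hg : g ∈ geomReal K) :
    ((Finset.univ.filter fun v => f v ≠ 0) ×ˢ (Finset.univ.filter fun v => g v ≠ 0))
      ∈ (prodSC K K).faces := by
  obtain ⟨v, hv⟩ := exists_ne_zero hf.2.1
  obtain ⟨w, hw⟩ := exists_ne_zero hg.2.1
  have hσne : (Finset.univ.filter fun v => f v ≠ 0).Nonempty :=
    ⟨v, Finset.mem_filter.2 ⟨mem_univ v, hv⟩⟩
  have hτne : (Finset.univ.filter fun v => g v ≠ 0).Nonempty :=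
    ⟨w, Finset.mem_filter.2 ⟨mem_univ w, hw⟩⟩
  constructor
  · refine K.down_closed (fsupp_face hf) ?_ ((hσne.product hτne).image _)
    intro x hx
    obtain ⟨p, hp, rfl⟩ := Finset.mem_image.1 hx
    exact (Finset.mem_product.1 hp).1
  · refine K.down_closed (fsupp_face hg) ?_ ((hσne.product hτne).image _)
    intro x hx
    obtain ⟨p, hp, rfl⟩ := Finset.mem_image.1 hx
    exact (Finset.mem_product.1 hp).2

lemma tens_mem_sub {Ω' : SC (V × V)} {f g : V → ℝ}
    (hf0 : ∀ v, 0 ≤ f v) (hg0 : ∀ v, 0 ≤ g v) (hf1 : ∑ v, f v = 1) (hg1 : ∑ v, g v = 1)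
    (hface : ((Finset.univ.filter fun v => f v ≠ 0) ×ˢ
      (Finset.univ.filter fun v => g v ≠ 0)) ∈ Ω'.faces) :
    tens f g ∈ geomReal Ω' := by
  refine ⟨fun p => mul_nonneg (hf0 p.1) (hg0 p.2), sum_tens hf1 hg1, _, hface, ?_⟩
  intro p hp
  have := mul_ne_zero_iff.1 hp
  exact Finset.mem_product.2 ⟨Finset.mem_filter.2 ⟨mem_univ _, this.1⟩,
    Finset.mem_filter.2 ⟨mem_univ _, this.2⟩⟩

lemma TCle_to_secat {V : Type} [Fintype V] (K : SC V) {m : ℕ} (h : TCle K m) :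
    SecatLe (pathFib ↥(geomReal K)) m := by
  obtain ⟨Ω, hFar, hcov⟩ := h
  choose U hUopen hUmem hsec using fun i => farber_section K (Ω i) (hFar i)
  choose s hscont hsval using hsec
  refine ⟨U, hUopen, ?_, fun i => ⟨s i, hscont i, hsval i⟩⟩
  intro y
  obtain ⟨i, hi⟩ := hcov _ (supp_prod_face y.1.2 y.2.2)
  exact ⟨i, hUmem i y
    (tens_mem_sub y.1.2.1 y.2.2.1 y.1.2.2.1 y.2.2.2.1 hi)⟩

end TCaux


/-- `TC |K| ≤ TC K`. -/
theorem TCtop_geomReal_le_TCdisc {V : Type} [Fintype V] (K : SC V) :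
    TCtop (geomReal K) ≤ TCdisc K := by
  unfold TCtop secat TCdisc
  refine sInf_le_sInf ?_
  rintro n ⟨m, rfl, hm⟩
  exact ⟨m, rfl, TCaux.TCle_to_secat K hm⟩
end
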